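/- arXiv:1604.02492 — 6 statements merged into one kernel-verified Lean document; each statement's English description precedes it below -/
import Mathlib

section
/- Fix m ≥ 1 and a query function f : 𝔽₂^m × 𝔽₂ → [0,1]. For an affine function ℓ on 𝔽₂^m, let T(ℓ) = 2^{-m} · Σ_{y ∈ 𝔽₂^m} f(y, ℓ(y)) be the true answer under hypothesis ℓ, and let P = 2^{-m-1} · Σ_{y ∈ 𝔽₂^m} Σ_{z ∈ 𝔽₂} f(y, z) be the prior mean answer. If ℓ is chosen uniformly at random among all 2^{m+1} affine functions on 𝔽₂^m, then for every ε > 0, the probability that |T(ℓ) − P| ≥ ε is at most 2^{-m}/(4ε²). -/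
set_option maxHeartbeats 1000000

open Finset

noncomputable def sgn (z : ZMod 2) : ℝ := if z = 0 then 1 else -1

lemma sgn_add (u v : ZMod 2) : sgn (u + v) = sgn u * sgn v := by
  rcases (show ∀ x : ZMod 2, x = 0 ∨ x = 1 by decide) u with rfl | rfl <;> rcases (show ∀ x : ZMod 2, x = 0 ∨ x = 1 by decide) v with rfl | rfl <;>
    simp [sgn, show (1:ZMod 2)+1 = 0 from rfl, show (1:ZMod 2) ≠ 0 by decide]

lemma sgn_add_one (x : ZMod 2) : sgn (x + 1) = - sgn x := by
  rcases (show ∀ x : ZMod 2, x = 0 ∨ x = 1 by decide) x with rfl | rfl <;> simp [sgn, show (1:ZMod 2)+1 = 0 from rfl, show (1:ZMod 2) ≠ 0 by decide]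

lemma sum_zmod2 (h : ZMod 2 → ℝ) : ∑ z : ZMod 2, h z = h 0 + h 1 := by
  rw [show (Finset.univ : Finset (ZMod 2)) = {0, 1} by decide, Finset.sum_pair (by decide)]

lemma f_decomp (h : ZMod 2 → ℝ) (z : ZMod 2) :
    h z = (h 0 + h 1) / 2 + sgn z * ((h 0 - h 1) / 2) := by
  rcases (show ∀ x : ZMod 2, x = 0 ∨ x = 1 by decide) z with rfl | rfl <;> simp [sgn, show (1:ZMod 2) ≠ 0 by decide] <;> ring

lemma char_sum (m : ℕ) (w : Fin m → ZMod 2) :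
    ∑ b : Fin m → ZMod 2, sgn (∑ i, b i * w i) =
      if w = 0 then (2:ℝ) ^ m else 0 := by
  split_ifs with hw
  · subst hw
    simp [sgn, Finset.card_univ]
  · obtain ⟨i₀, hi₀⟩ : ∃ i, w i ≠ 0 := by
      by_contra h; push_neg at h; exact hw (funext h)
    have hw1 : w i₀ = 1 := by
      have : ∀ x : ZMod 2, x ≠ 0 → x = 1 := by decide
      exact this _ hi₀
    set e : Fin m → ZMod 2 := Pi.single i₀ 1 with he
    refine Finset.sum_involution (fun b _ => b + e) ?_ ?_ ?_ ?_
    · intro b _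
      have key : (∑ i, (b + e) i * w i) = (∑ i, b i * w i) + 1 := by
        have h1 : ∀ i, (b + e) i * w i = b i * w i + e i * w i := by
          intro i; simp [add_mul]
        rw [Finset.sum_congr rfl (fun i _ => h1 i), Finset.sum_add_distrib]
        congr 1
        rw [Finset.sum_eq_single_of_mem i₀ (Finset.mem_univ _)
          (fun j _ hj => by simp [he, Pi.single_apply, hj])]
        simp [he, hw1]
      rw [key, sgn_add_one]; ring
    · intro b _ _ h
      have := congrFun h i₀
      simp [he] at this
    · intro b _; exact Finset.mem_univ _
    · intro b _
      funext j
      have hx : ∀ x : ZMod 2, x + x = 0 := by decide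
      show b j + e j + e j = b j
      rw [add_assoc, hx, add_zero]

lemma orth (m : ℕ) (y y' : Fin m → ZMod 2) :
    ∑ ab : ZMod 2 × (Fin m → ZMod 2),
      sgn (ab.1 + ∑ i, ab.2 i * y i) * sgn (ab.1 + ∑ i, ab.2 i * y' i) =
      if y = y' then (2:ℝ)^(m+1) else 0 := by
  have hx : ∀ x : ZMod 2, x + x = 0 := by decide
  have step : ∀ (a : ZMod 2) (b : Fin m → ZMod 2),
      sgn (a + ∑ i, b i * y i) * sgn (a + ∑ i, b i * y' i)
        = sgn (∑ i, b i * ((fun i => y i + y' i) i)) := by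
    intro a b
    rw [← sgn_add]
    congr 1
    have h1 : (a + ∑ i, b i * y i) + (a + ∑ i, b i * y' i)
        = (a + a) + ((∑ i, b i * y i) + (∑ i, b i * y' i)) := by ring
    rw [h1, hx, zero_add, ← Finset.sum_add_distrib]
    exact Finset.sum_congr rfl (fun i _ => by ring)
  rw [Fintype.sum_prod_type]
  rw [Finset.sum_congr rfl (fun a _ => Finset.sum_congr rfl (fun b _ => step a b))]
  rw [Finset.sum_congr rfl (fun a _ => char_sum m (fun i => y i + y' i))]
  have hiff : ((fun i => y i + y' i) = 0) ↔ y = y' := by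
    constructor
    · intro h; funext i
      have h3 := congrFun h i
      have h2 : ∀ u v : ZMod 2, u + v = 0 → u = v := by decide
      exact h2 _ _ h3
    · intro h; subst h; funext i; exact hx _
  rw [Finset.sum_const]
  simp only [hiff, Finset.card_univ, ZMod.card, nsmul_eq_mul]
  split_ifs
  · push_cast; rw [pow_succ]; ring
  · simp

/-- Prior-mean concentration for the linear classification model `LC_m` (Lemma 6):
if `ℓ` is a uniformly random affine function on `𝔽₂^m`, the true answer `T ℓ`
deviates from the prior mean `P` by at least `ε` with probability at most
`2^{-m} / (4 ε²)`. -/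
theorem stmt_0 (m : ℕ) (hm : 1 ≤ m) (f : (Fin m → ZMod 2) × ZMod 2 → ℝ)
    (hf : ∀ x, 0 ≤ f x ∧ f x ≤ 1)
    (T : (ZMod 2 × (Fin m → ZMod 2)) → ℝ)
    (hT : ∀ ab, T ab = (2 : ℝ) ^ (-(m : ℤ)) *
      ∑ y : Fin m → ZMod 2, f (y, ab.1 + ∑ i, ab.2 i * y i))
    (P : ℝ)
    (hP : P = (2 : ℝ) ^ (-(m : ℤ) - 1) *
      ∑ y : Fin m → ZMod 2, ∑ z : ZMod 2, f (y, z))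
    (ε : ℝ) (hε : 0 < ε) :
    ((Finset.univ.filter
        (fun ab : ZMod 2 × (Fin m → ZMod 2) => ε ≤ |T ab - P|)).card : ℝ) /
      2 ^ (m + 1) ≤ (2 : ℝ) ^ (-(m : ℤ)) / (4 * ε ^ 2) := by
  set c : ℝ := (2 : ℝ) ^ (-(m : ℤ)) with hc
  set g : (Fin m → ZMod 2) → ℝ := fun y => (f (y,0) - f (y,1))/2 with hg
  have hq : (0:ℝ) < 2 ^ m := by positivity
  have hcq : c = ((2:ℝ)^m)⁻¹ := by rw [hc, zpow_neg, zpow_natCast]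
  -- step 1: T ab - P = c * ∑ sgn * g
  have hTP : ∀ ab : ZMod 2 × (Fin m → ZMod 2),
      T ab - P = c * ∑ y, sgn (ab.1 + ∑ i, ab.2 i * y i) * g y := by
    intro ab
    rw [hT, hP]
    have h2 : ∀ (y : Fin m → ZMod 2) (z : ZMod 2),
        f (y, z) = (f (y,0) + f (y,1))/2 + sgn z * g y :=
      fun y z => f_decomp (fun z => f (y,z)) z
    have e1 : ∑ y : Fin m → ZMod 2, f (y, ab.1 + ∑ i, ab.2 i * y i)
        = (∑ y : Fin m → ZMod 2, (f (y,0) + f (y,1))/2)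
          + ∑ y, sgn (ab.1 + ∑ i, ab.2 i * y i) * g y := by
      rw [Finset.sum_congr rfl (fun y _ => h2 y _), Finset.sum_add_distrib]
    have e2 : ∑ y : Fin m → ZMod 2, ∑ z : ZMod 2, f (y, z)
        = ∑ y : Fin m → ZMod 2, (f (y,0) + f (y,1)) :=
      Finset.sum_congr rfl (fun y _ => sum_zmod2 (fun z => f (y,z)))
    have hz : (2:ℝ)^(-(m:ℤ)-1) = c / 2 := by
      rw [hc, sub_eq_add_neg, zpow_add₀ (two_ne_zero)]; norm_num; ring
    rw [e1, e2, hz]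
    rw [show (∑ y : Fin m → ZMod 2, (f (y,0) + f (y,1))/2)
        = (∑ y : Fin m → ZMod 2, (f (y,0) + f (y,1)))/2 from (Finset.sum_div _ _ _).symm]
    ring
  -- step 2: variance identity
  have hvar : ∑ ab : ZMod 2 × (Fin m → ZMod 2), (T ab - P)^2
      = c * c * 2^(m+1) * ∑ y, (g y)^2 := by
    have e1 : ∀ ab : ZMod 2 × (Fin m → ZMod 2), (T ab - P)^2
        = c * c * ∑ y, ∑ y', (g y * g y') *
          (sgn (ab.1 + ∑ i, ab.2 i * y i) * sgn (ab.1 + ∑ i, ab.2 i * y' i)) := by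
      intro ab
      rw [hTP ab, sq, mul_mul_mul_comm, Finset.sum_mul_sum]
      exact congrArg (c * c * ·)
        (Finset.sum_congr rfl fun y _ => Finset.sum_congr rfl fun y' _ => by ring)
    rw [Finset.sum_congr rfl (fun ab _ => e1 ab), ← Finset.mul_sum]
    rw [Finset.sum_comm]
    have e2 : ∀ y : Fin m → ZMod 2,
        (∑ ab : ZMod 2 × (Fin m → ZMod 2), ∑ y', (g y * g y') *
          (sgn (ab.1 + ∑ i, ab.2 i * y i) * sgn (ab.1 + ∑ i, ab.2 i * y' i)))
        = (g y)^2 * 2^(m+1) := by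
      intro y
      rw [Finset.sum_comm]
      have e3 : ∀ y' : Fin m → ZMod 2,
          (∑ ab : ZMod 2 × (Fin m → ZMod 2), (g y * g y') *
            (sgn (ab.1 + ∑ i, ab.2 i * y i) * sgn (ab.1 + ∑ i, ab.2 i * y' i)))
          = (g y * g y') * (if y = y' then (2:ℝ)^(m+1) else 0) := by
        intro y'
        rw [← Finset.mul_sum, orth]
      rw [Finset.sum_congr rfl (fun y' _ => e3 y')]
      simp only [mul_ite, mul_zero, Finset.sum_ite_eq, Finset.mem_univ, if_true]
      ring
    rw [Finset.sum_congr rfl (fun y _ => e2 y), ← Finset.sum_mul]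
    ring
  -- step 3: variance bound
  have hgb : ∀ y : Fin m → ZMod 2, (g y)^2 ≤ 1/4 := by
    intro y
    have h0 := hf (y, 0); have h1 := hf (y, 1)
    rw [hg]; dsimp only
    nlinarith [h0.1, h0.2, h1.1, h1.2]
  have hsum : ∑ y : Fin m → ZMod 2, (g y)^2 ≤ 2^m * (1/4) := by
    calc ∑ y : Fin m → ZMod 2, (g y)^2 ≤ (Finset.univ.card : ℝ) * (1/4) := by
          rw [← nsmul_eq_mul]
          exact Finset.sum_le_card_nsmul _ _ _ (fun y _ => hgb y)
      _ = 2^m * (1/4) := by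
          rw [Finset.card_univ]
          simp [Fintype.card_fun, ZMod.card]
  have hvb : ∑ ab : ZMod 2 × (Fin m → ZMod 2), (T ab - P)^2 ≤ 1/2 := by
    have hnum : c * c * 2^(m+1) * (2^m * (1/4)) = 1/2 := by
      rw [hcq, pow_succ]; field_simp; ring
    rw [hvar, ← hnum]
    have hcc : (0:ℝ) ≤ c * c * 2^(m+1) := by positivity
    exact mul_le_mul_of_nonneg_left hsum hcc
  set N := (Finset.univ.filter
      (fun ab : ZMod 2 × (Fin m → ZMod 2) => ε ≤ |T ab - P|)).card with hN
  have cheb : (N:ℝ) * ε^2 ≤ ∑ ab : ZMod 2 × (Fin m → ZMod 2), (T ab - P)^2 := by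
    calc (N:ℝ) * ε^2 = N • ε^2 := (nsmul_eq_mul _ _).symm
      _ ≤ ∑ ab ∈ Finset.univ.filter
            (fun ab : ZMod 2 × (Fin m → ZMod 2) => ε ≤ |T ab - P|), (T ab - P)^2 :=
          Finset.card_nsmul_le_sum _ _ _ (fun ab hab => by
            have h := (Finset.mem_filter.mp hab).2
            calc ε^2 ≤ |T ab - P|^2 := pow_le_pow_left₀ hε.le h 2
              _ = (T ab - P)^2 := sq_abs _)
      _ ≤ ∑ ab : ZMod 2 × (Fin m → ZMod 2), (T ab - P)^2 :=
          Finset.sum_le_sum_of_subset_of_nonneg (Finset.filter_subset _ _)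
            (fun ab _ _ => sq_nonneg _)
  have hNb : (N:ℝ) * ε^2 ≤ 1/2 := cheb.trans hvb
  rw [div_le_div_iff₀ (by positivity) (by positivity)]
  have hc2 : c * 2^(m+1) = 2 := by
    rw [hcq, pow_succ]; field_simp
  rw [hc2]
  nlinarith [hNb]
end

section
/- Let μ be a Borel probability measure on ℝ with μ([0,1]) = 1 and with no atoms. Then there exists a point x ∈ (0,1) such that for every η > 0, both μ([x−η, x]) ≤ 2η and μ([x, x+η]) ≤ 2η. -/
open MeasureTheory Set Filter Topology NNReal ENNReal

namespace Stmt3Aux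

/-- On a bounded open set, every point lies in a maximal open interval. -/
theorem comp_interval (W : Set ℝ) (hW : IsOpen W) (hWb : W ⊆ Ioo (-1 : ℝ) 2)
    {x : ℝ} (hx : x ∈ W) :
    ∃ a b : ℝ, a < x ∧ x < b ∧ a ∉ W ∧ b ∉ W ∧ Ioo a b ⊆ W := by
  obtain ⟨ε, hε, hball⟩ := Metric.isOpen_iff.1 hW x hx
  set A : Set ℝ := {y | x ≤ y ∧ Icc x y ⊆ W} with hA
  have hxA : x ∈ A := ⟨le_rfl, by simp [Set.Icc_self, hx]⟩
  have hAbdd : BddAbove A := by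
    refine ⟨2, fun y hy => ?_⟩
    have : y ∈ W := hy.2 ⟨hy.1, le_rfl⟩
    exact le_of_lt (hWb this).2
  set b := sSup A with hb
  have hxb : x ≤ b := le_csSup hAbdd hxA
  have hIco : Ico x b ⊆ W := by
    intro z hz
    obtain ⟨y, hyA, hzy⟩ := exists_lt_of_lt_csSup ⟨x, hxA⟩ hz.2
    exact hyA.2 ⟨hz.1, le_of_lt hzy⟩
  have hbW : b ∉ W := by
    intro hbW
    obtain ⟨δ, hδ, hballb⟩ := Metric.isOpen_iff.1 hW b hbW
    have hIcc : Icc x b ⊆ W := by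
      intro z hz
      rcases lt_or_eq_of_le hz.2 with h | h
      · exact hIco ⟨hz.1, h⟩
      · rwa [h]
    have : b + δ / 2 ∈ A := by
      refine ⟨by linarith, fun z hz => ?_⟩
      rcases le_or_gt z b with h | h
      · exact hIcc ⟨hz.1, h⟩
      · exact hballb (by rw [Real.ball_eq_Ioo]; constructor <;> [linarith; linarith [hz.2]])
    linarith [le_csSup hAbdd this]
  have hxltb : x < b := by
    have : x + ε / 2 ∈ A := by
      refine ⟨by linarith, fun z hz => ?_⟩
      exact hball (by rw [Real.ball_eq_Ioo]; constructor <;> [linarith [hz.1]; linarith [hz.2]])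
    calc x < x + ε / 2 := by linarith
    _ ≤ b := le_csSup hAbdd this
  -- mirror for a
  set B : Set ℝ := {y | y ≤ x ∧ Icc y x ⊆ W} with hB
  have hxB : x ∈ B := ⟨le_rfl, by simp [Set.Icc_self, hx]⟩
  have hBbdd : BddBelow B := by
    refine ⟨-1, fun y hy => ?_⟩
    have : y ∈ W := hy.2 ⟨le_rfl, hy.1⟩
    exact le_of_lt (hWb this).1
  set a := sInf B with ha
  have hax : a ≤ x := csInf_le hBbdd hxB
  have hIoc : Ioc a x ⊆ W := by
    intro z hz
    obtain ⟨y, hyB, hzy⟩ := exists_lt_of_csInf_lt ⟨x, hxB⟩ hz.1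
    exact hyB.2 ⟨le_of_lt hzy, hz.2⟩
  have haW : a ∉ W := by
    intro haW
    obtain ⟨δ, hδ, hballa⟩ := Metric.isOpen_iff.1 hW a haW
    have hIcc : Icc a x ⊆ W := by
      intro z hz
      rcases lt_or_eq_of_le hz.1 with h | h
      · exact hIoc ⟨h, hz.2⟩
      · rwa [← h]
    have : a - δ / 2 ∈ B := by
      refine ⟨by linarith, fun z hz => ?_⟩
      rcases lt_or_ge z a with h | h
      · exact hballa (by rw [Real.ball_eq_Ioo]; constructor <;> [linarith [hz.1]; linarith])
      · exact hIcc ⟨h, hz.2⟩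
    linarith [csInf_le hBbdd this]
  have haltx : a < x := by
    have : x - ε / 2 ∈ B := by
      refine ⟨by linarith, fun z hz => ?_⟩
      exact hball (by rw [Real.ball_eq_Ioo]; constructor <;> [linarith [hz.1]; linarith [hz.2]])
    calc a ≤ x - ε / 2 := csInf_le hBbdd this
    _ < x := by linarith
  refine ⟨a, b, haltx, hxltb, haW, hbW, fun z hz => ?_⟩
  rcases le_or_gt z x with h | h
  · exact hIoc ⟨hz.1, h⟩
  · exact hIco ⟨le_of_lt h, hz.2⟩

/-- Maximal intervals are equal or disjoint. -/
theorem eq_or_disjoint (W : Set ℝ) {a₁ b₁ a₂ b₂ : ℝ}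
    (ha₁ : a₁ ∉ W) (hb₁ : b₁ ∉ W) (ha₂ : a₂ ∉ W) (hb₂ : b₂ ∉ W)
    (h₁ : Ioo a₁ b₁ ⊆ W) (h₂ : Ioo a₂ b₂ ⊆ W) :
    Ioo a₁ b₁ = Ioo a₂ b₂ ∨ Disjoint (Ioo a₁ b₁) (Ioo a₂ b₂) := by
  rcases Set.disjoint_or_nonempty_inter (Ioo a₁ b₁) (Ioo a₂ b₂) with h | ⟨z, hz1, hz2⟩
  · exact Or.inr h
  left
  have hae : a₁ = a₂ := by
    rcases lt_trichotomy a₁ a₂ with h | h | h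
    · exact absurd (h₁ ⟨h, lt_trans hz2.1 hz1.2⟩) ha₂
    · exact h
    · exact absurd (h₂ ⟨h, lt_trans hz1.1 hz2.2⟩) ha₁
  have hbe : b₁ = b₂ := by
    rcases lt_trichotomy b₁ b₂ with h | h | h
    · exact absurd (h₂ ⟨lt_trans hz2.1 hz1.2, h⟩) hb₁
    · exact h
    · exact absurd (h₁ ⟨lt_trans hz1.1 hz2.2, h⟩) hb₂
  rw [hae, hbe]

/-- The key covering bound: if every maximal interval of the bounded open set `W`
carries `μ`-mass at least twice its length, then `2 vol W ≤ μ W`. -/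
theorem cover_bound (μ : Measure ℝ) (W : Set ℝ) (hW : IsOpen W) (hWb : W ⊆ Ioo (-1 : ℝ) 2)
    (H : ∀ a b : ℝ, a < b → a ∉ W → b ∉ W → Ioo a b ⊆ W →
      ENNReal.ofReal (2 * (b - a)) ≤ μ (Ioo a b)) :
    2 * volume W ≤ μ W := by
  classical
  rw [hW.measure_eq_iSup_isCompact, ENNReal.mul_iSup]
  refine iSup_le fun K => ?_
  rw [ENNReal.mul_iSup]
  refine iSup_le fun hKW => ?_
  rw [ENNReal.mul_iSup]
  refine iSup_le fun hK => ?_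
  -- choose maximal intervals
  have hch : ∀ x : ℝ, x ∈ W → ∃ a b : ℝ, a < x ∧ x < b ∧ a ∉ W ∧ b ∉ W ∧ Ioo a b ⊆ W :=
    fun x hx => comp_interval W hW hWb hx
  choose! aa bb h1 h2 h3 h4 h5 using hch
  -- finite subcover
  set I : ℝ → Set ℝ := fun x => Ioo (aa x) (bb x) with hI
  have hcov : K ⊆ ⋃ x ∈ W, I x := by
    intro z hz
    exact Set.mem_biUnion (hKW hz) ⟨h1 z (hKW hz), h2 z (hKW hz)⟩
  obtain ⟨t, ht⟩ := hK.elim_finite_subcover_image (fun x hx => isOpen_Ioo) hcov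
  obtain ⟨htW, htfin, htcov⟩ := ht
  lift t to Finset ℝ using htfin
  set S : Finset (Set ℝ) := Finset.image I t with hS
  have hSsub : ∀ s ∈ S, ∃ x ∈ W, s = I x := by
    intro s hs
    obtain ⟨x, hxt, rfl⟩ := Finset.mem_image.1 hs
    exact ⟨x, htW hxt, rfl⟩
  have hdisj : (S : Set (Set ℝ)).PairwiseDisjoint id := by
    intro s hs s' hs' hne
    obtain ⟨x, hxW, rfl⟩ := hSsub s hs
    obtain ⟨x', hx'W, rfl⟩ := hSsub s' hs'
    rcases eq_or_disjoint W (h3 x hxW) (h4 x hxW) (h3 x' hx'W) (h4 x' hx'W)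
      (h5 x hxW) (h5 x' hx'W) with h | h
    · exact absurd h hne
    · exact h
  have hmeas : ∀ s ∈ S, MeasurableSet s := by
    intro s hs
    obtain ⟨x, _, rfl⟩ := hSsub s hs
    exact measurableSet_Ioo
  have hKS : K ⊆ ⋃ s ∈ S, s := by
    intro z hz
    obtain ⟨x, hxt, hzI⟩ := Set.mem_iUnion₂.1 (htcov hz)
    exact Set.mem_biUnion (Finset.mem_image_of_mem I hxt) hzI
  calc 2 * volume K ≤ 2 * volume (⋃ s ∈ S, s) := mul_le_mul_right (measure_mono hKS) 2
  _ = 2 * ∑ s ∈ S, volume s := by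
        have hb := measure_biUnion_finset (μ := volume) hdisj hmeas
        simp only [id] at hb
        rw [hb]
  _ = ∑ s ∈ S, 2 * volume s := by rw [Finset.mul_sum]
  _ ≤ ∑ s ∈ S, μ s := by
      refine Finset.sum_le_sum fun s hs => ?_
      obtain ⟨x, hxW, rfl⟩ := hSsub s hs
      have hab : aa x < bb x := lt_trans (h1 x hxW) (h2 x hxW)
      have := H (aa x) (bb x) hab (h3 x hxW) (h4 x hxW) (h5 x hxW)
      calc 2 * volume (Ioo (aa x) (bb x)) = 2 * ENNReal.ofReal (bb x - aa x) := by
            rw [Real.volume_Ioo]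
      _ = ENNReal.ofReal (2 * (bb x - aa x)) := by
            rw [ENNReal.ofReal_mul (by norm_num)]; norm_num
      _ ≤ μ (Ioo (aa x) (bb x)) := this
  _ = μ (⋃ s ∈ S, s) := by
        have hb := measure_biUnion_finset (μ := μ) hdisj hmeas
        simp only [id] at hb
        rw [hb]
  _ ≤ μ W := by
      refine measure_mono ?_
      refine Set.iUnion₂_subset fun s hs => ?_
      obtain ⟨x, hxW, rfl⟩ := hSsub s hs
      exact h5 x hxW


noncomputable def cdf (μ : Measure ℝ) (t : ℝ) : ℝ := (μ (Iic t)).toReal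

noncomputable def gfun (μ : Measure ℝ) (t : ℝ) : ℝ := 2 * t - cdf μ t

theorem cdf_nonneg (μ : Measure ℝ) (t : ℝ) : 0 ≤ cdf μ t := ENNReal.toReal_nonneg

theorem cdf_le_one (μ : Measure ℝ) [IsProbabilityMeasure μ] (t : ℝ) : cdf μ t ≤ 1 := by
  have : (μ (Iic t)).toReal ≤ (1 : ℝ≥0∞).toReal :=
    ENNReal.toReal_mono (by norm_num) prob_le_one
  simpa [cdf] using this

theorem cdf_diff (μ : Measure ℝ) [IsFiniteMeasure μ] {a b : ℝ} (hab : a ≤ b) :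
    cdf μ b - cdf μ a = (μ (Ioc a b)).toReal := by
  have h1 : μ (Iic a) + μ (Ioc a b) = μ (Iic b) := by
    rw [← measure_union (Iic_disjoint_Ioc le_rfl) measurableSet_Ioc, Iic_union_Ioc_eq_Iic hab]
  rw [cdf, cdf, ← h1, ENNReal.toReal_add (measure_ne_top μ _) (measure_ne_top μ _)]
  ring

theorem measure_Ioc_eq (μ : Measure ℝ) [IsFiniteMeasure μ] {a b : ℝ} (hab : a ≤ b) :
    μ (Ioc a b) = ENNReal.ofReal (cdf μ b - cdf μ a) := by
  rw [cdf_diff μ hab, ENNReal.ofReal_toReal (measure_ne_top μ _)]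

theorem cdf_continuous (μ : Measure ℝ) [IsFiniteMeasure μ] [NullSingletonClass μ] :
    Continuous (cdf μ) := by
  rw [Metric.continuous_iff]
  intro t ε hε
  have hmem : ∀ n : ℕ, NullMeasurableSet (Icc (t - 1/(n+1)) (t + 1/(n+1))) μ :=
    fun n => measurableSet_Icc.nullMeasurableSet
  have hanti : Antitone (fun n : ℕ => Icc (t - 1/(n+1)) (t + 1/(n+1))) := by
    intro m n hmn
    have hmn' : (m : ℝ) ≤ n := Nat.cast_le.2 hmn
    have h1 : (1:ℝ)/(n+1) ≤ 1/(m+1) := by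
      apply one_div_le_one_div_of_le
      · positivity
      · linarith
    apply Icc_subset_Icc <;> linarith
  have hInter : (⋂ n : ℕ, Icc (t - 1/(n+1)) (t + 1/(n+1))) = {t} := by
    ext x
    simp only [mem_iInter, mem_Icc, mem_singleton_iff]
    constructor
    · intro h
      by_contra hne
      have hpos : 0 < |x - t| := abs_pos.2 (sub_ne_zero.2 hne)
      obtain ⟨n, hn⟩ := exists_nat_one_div_lt hpos
      have h1 : |x - t| ≤ 1/(n+1) := abs_le.2 ⟨by linarith [(h n).1], by linarith [(h n).2]⟩
      linarith
    · rintro rfl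
      intro n
      have : (0:ℝ) < 1/(n+1) := by positivity
      constructor <;> linarith
  have htend : Tendsto (fun n : ℕ => μ (Icc (t - 1/(n+1)) (t + 1/(n+1)))) atTop (𝓝 0) := by
    have h := tendsto_measure_iInter_atTop hmem hanti ⟨0, measure_ne_top μ _⟩
    rw [hInter] at h
    simpa [measure_singleton, Function.comp_def] using h
  have hev : ∀ᶠ n : ℕ in atTop, μ (Icc (t - 1/(n+1)) (t + 1/(n+1))) < ENNReal.ofReal ε :=
    htend.eventually_lt_const (ENNReal.ofReal_pos.2 hε)
  obtain ⟨n, hn⟩ := hev.exists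
  refine ⟨1/(n+1), by positivity, fun a ha => ?_⟩
  have hdist : |a - t| < 1/(n+1) := by rwa [Real.dist_eq] at ha
  have habs := abs_lt.1 hdist
  have hbound : ∀ c d : ℝ, c ≤ d → t - 1/(n+1) ≤ c → d ≤ t + 1/(n+1) →
      cdf μ d - cdf μ c < ε := by
    intro c d hcd hc hd
    rw [cdf_diff μ hcd]
    have hsub : Ioc c d ⊆ Icc (t - 1/(n+1)) (t + 1/(n+1)) := fun z hz =>
      ⟨le_trans hc (le_of_lt hz.1), le_trans hz.2 hd⟩
    have := lt_of_le_of_lt (measure_mono hsub) hn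
    exact (ENNReal.lt_ofReal_iff_toReal_lt (measure_ne_top μ _)).1 this
  have hmono : Monotone (cdf μ) := fun u v huv =>
    ENNReal.toReal_mono (measure_ne_top μ _) (measure_mono (Iic_subset_Iic.2 huv))
  rw [Real.dist_eq, abs_lt]
  rcases le_total a t with h | h
  · constructor
    · have := hbound a t h (by linarith) (by linarith)
      linarith
    · have := hmono h; linarith [hε]
  · constructor
    · have := hmono h; linarith [hε]
    · have := hbound t a h (by linarith) (by linarith)
      linarith

theorem cdf_zero_of (μ : Measure ℝ) [IsProbabilityMeasure μ] [NullSingletonClass μ]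
    (hμ1 : μ (Icc (0:ℝ) 1) = 1) {t : ℝ} (ht : t ≤ 0) : cdf μ t = 0 := by
  have hc : μ (Icc (0:ℝ) 1)ᶜ = 0 := by
    rw [measure_compl measurableSet_Icc (measure_ne_top μ _), measure_univ, hμ1, tsub_self]
  have hsub : Iic t ⊆ (Icc (0:ℝ) 1)ᶜ ∪ {t} := by
    intro z hz
    rcases lt_or_eq_of_le (le_trans hz ht) with h | h
    · exact Or.inl (fun hmem => absurd hmem.1 (not_le.2 h))
    · have hzt : z = t := le_antisymm hz (by linarith [ht])
      exact Or.inr hzt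
  have h0 : μ (Iic t) = 0 := by
    refine measure_mono_null hsub ?_
    refine le_antisymm ?_ zero_le
    calc μ ((Icc (0:ℝ) 1)ᶜ ∪ {t}) ≤ μ (Icc (0:ℝ) 1)ᶜ + μ {t} := measure_union_le _ _
    _ = 0 := by rw [hc, measure_singleton, add_zero]
  simp [cdf, h0]

theorem cdf_one_of (μ : Measure ℝ) [IsProbabilityMeasure μ]
    (hμ1 : μ (Icc (0:ℝ) 1) = 1) {t : ℝ} (ht : 1 ≤ t) : cdf μ t = 1 := by
  have h1 : μ (Iic t) = 1 := by
    refine le_antisymm prob_le_one ?_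
    rw [← hμ1]
    exact measure_mono fun z hz => le_trans hz.2 ht
  simp [cdf, h1]

def badU (μ : Measure ℝ) : Set ℝ := {x | ∃ y, y < x ∧ gfun μ x < gfun μ y}

def badV (μ : Measure ℝ) : Set ℝ := {x | ∃ z, x < z ∧ gfun μ z < gfun μ x}

theorem gfun_cont (μ : Measure ℝ) [IsFiniteMeasure μ] [NullSingletonClass μ] : Continuous (gfun μ) :=
  ((continuous_const.mul continuous_id).sub (cdf_continuous μ))

theorem badU_open (μ : Measure ℝ) [IsFiniteMeasure μ] [NullSingletonClass μ] : IsOpen (badU μ) := by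
  rw [isOpen_iff_mem_nhds]
  rintro x ⟨y, hyx, hgxy⟩
  have h1 : IsOpen ({x' : ℝ | y < x'} ∩ {x' : ℝ | gfun μ x' < gfun μ y}) :=
    (isOpen_lt continuous_const continuous_id).inter
      (isOpen_lt (gfun_cont μ) continuous_const)
  refine Filter.mem_of_superset (h1.mem_nhds ⟨hyx, hgxy⟩) ?_
  rintro x' ⟨h1', h2'⟩
  exact ⟨y, h1', h2'⟩

theorem badV_open (μ : Measure ℝ) [IsFiniteMeasure μ] [NullSingletonClass μ] : IsOpen (badV μ) := by
  rw [isOpen_iff_mem_nhds]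
  rintro x ⟨z, hxz, hgz⟩
  have h1 : IsOpen ({x' : ℝ | x' < z} ∩ {x' : ℝ | gfun μ z < gfun μ x'}) :=
    (isOpen_lt continuous_id continuous_const).inter
      (isOpen_lt continuous_const (gfun_cont μ))
  refine Filter.mem_of_superset (h1.mem_nhds ⟨hxz, hgz⟩) ?_
  rintro x' ⟨h1', h2'⟩
  exact ⟨z, h1', h2'⟩

theorem badU_sub (μ : Measure ℝ) [IsProbabilityMeasure μ] [NullSingletonClass μ]
    (hμ1 : μ (Icc (0:ℝ) 1) = 1) : badU μ ⊆ Ioo (-1 : ℝ) 2 := by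
  rintro x ⟨y, hyx, hgxy⟩
  constructor
  · by_contra h
    push_neg at h
    have hgy : gfun μ y = 2*y := by
      rw [gfun, cdf_zero_of μ hμ1 (by linarith : y ≤ 0)]; ring
    have hgx : gfun μ x = 2*x := by
      rw [gfun, cdf_zero_of μ hμ1 (by linarith : x ≤ 0)]; ring
    rw [hgx, hgy] at hgxy
    linarith
  · by_contra h
    push_neg at h
    have hgx : gfun μ x = 2*x - 1 := by
      rw [gfun, cdf_one_of μ hμ1 (by linarith : (1:ℝ) ≤ x)]
    rcases le_or_gt 1 y with hy | hy
    · have hgy : gfun μ y = 2*y - 1 := by rw [gfun, cdf_one_of μ hμ1 hy]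
      rw [hgx, hgy] at hgxy
      linarith
    · have hgy : gfun μ y ≤ 2*y := by
        have := cdf_nonneg μ y
        rw [gfun]; linarith
      rw [hgx] at hgxy
      linarith

theorem badV_sub (μ : Measure ℝ) [IsProbabilityMeasure μ] [NullSingletonClass μ]
    (hμ1 : μ (Icc (0:ℝ) 1) = 1) : badV μ ⊆ Ioo (-1 : ℝ) 2 := by
  rintro x ⟨z, hxz, hgz⟩
  constructor
  · by_contra h
    push_neg at h
    have hgx : gfun μ x = 2*x := by
      rw [gfun, cdf_zero_of μ hμ1 (by linarith : x ≤ 0)]; ring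
    rcases le_or_gt z 0 with hz0 | hz0
    · have hgzv : gfun μ z = 2*z := by
        rw [gfun, cdf_zero_of μ hμ1 hz0]; ring
      rw [hgx, hgzv] at hgz
      linarith
    · have hgzv : 2*z - 1 ≤ gfun μ z := by
        have := cdf_le_one μ z
        rw [gfun]; linarith
      rw [hgx] at hgz
      linarith
  · by_contra h
    push_neg at h
    have hgx : gfun μ x = 2*x - 1 := by
      rw [gfun, cdf_one_of μ hμ1 (by linarith : (1:ℝ) ≤ x)]
    have hgzv : gfun μ z = 2*z - 1 := by
      rw [gfun, cdf_one_of μ hμ1 (by linarith : (1:ℝ) ≤ z)]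
    rw [hgx, hgzv] at hgz
    linarith

theorem sunU (μ : Measure ℝ) [IsProbabilityMeasure μ] [NullSingletonClass μ] :
    ∀ a b : ℝ, a < b → a ∉ badU μ → b ∉ badU μ → Ioo a b ⊆ badU μ →
      ENNReal.ofReal (2 * (b - a)) ≤ μ (Ioo a b) := by
  intro a b hab haU _ hsub
  have hstep : ∀ x ∈ Ioo a b, gfun μ x ≤ gfun μ a := by
    intro x hx
    obtain ⟨t, htmem, htmax⟩ := isCompact_Icc.exists_isMaxOn
      (nonempty_Icc.2 (le_of_lt hx.1)) ((gfun_cont μ).continuousOn)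
    rcases eq_or_lt_of_le htmem.1 with h | h
    · calc gfun μ x ≤ gfun μ t := htmax ⟨le_of_lt hx.1, le_rfl⟩
      _ = gfun μ a := by rw [← h]
    · exfalso
      have htU : t ∈ badU μ := hsub ⟨h, lt_of_le_of_lt htmem.2 hx.2⟩
      obtain ⟨y, hyt, hgy⟩ := htU
      rcases le_or_gt a y with hy | hy
      · exact absurd (htmax ⟨hy, le_of_lt (lt_of_lt_of_le hyt htmem.2)⟩) (not_le.2 hgy)
      · exact haU ⟨y, hy, lt_of_le_of_lt (htmax ⟨le_rfl, le_of_lt hx.1⟩) hgy⟩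
  have hga : gfun μ b ≤ gfun μ a := by
    haveI hne : (𝓝[Ioo a b] b).NeBot := by
      apply mem_closure_iff_nhdsWithin_neBot.1
      rw [closure_Ioo (ne_of_lt hab)]
      exact ⟨le_of_lt hab, le_rfl⟩
    exact le_of_tendsto ((gfun_cont μ).continuousWithinAt)
      (eventually_nhdsWithin_of_forall hstep)
  have h2 : 2 * (b - a) ≤ cdf μ b - cdf μ a := by
    simp only [gfun] at hga
    linarith
  calc ENNReal.ofReal (2 * (b - a)) ≤ ENNReal.ofReal (cdf μ b - cdf μ a) :=
        ENNReal.ofReal_le_ofReal h2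
  _ = μ (Ioc a b) := (measure_Ioc_eq μ (le_of_lt hab)).symm
  _ = μ (Ioo a b) := (measure_congr (Ioo_ae_eq_Ioc (μ := μ))).symm

theorem sunV (μ : Measure ℝ) [IsProbabilityMeasure μ] [NullSingletonClass μ] :
    ∀ a b : ℝ, a < b → a ∉ badV μ → b ∉ badV μ → Ioo a b ⊆ badV μ →
      ENNReal.ofReal (2 * (b - a)) ≤ μ (Ioo a b) := by
  intro a b hab _ hbV hsub
  have hstep : ∀ x ∈ Ioo a b, gfun μ b ≤ gfun μ x := by
    intro x hx
    obtain ⟨t, htmem, htmin⟩ := isCompact_Icc.exists_isMinOn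
      (nonempty_Icc.2 (le_of_lt hx.2)) ((gfun_cont μ).continuousOn)
    rcases eq_or_lt_of_le htmem.2 with h | h
    · calc gfun μ b = gfun μ t := by rw [h]
      _ ≤ gfun μ x := htmin ⟨le_rfl, le_of_lt hx.2⟩
    · exfalso
      have htV : t ∈ badV μ := hsub ⟨lt_of_lt_of_le hx.1 htmem.1, h⟩
      obtain ⟨z, htz, hgz⟩ := htV
      rcases le_or_gt z b with hz | hz
      · exact absurd (htmin ⟨le_of_lt (lt_of_le_of_lt htmem.1 htz), hz⟩) (not_le.2 hgz)
      · exact hbV ⟨z, hz, lt_of_lt_of_le hgz (htmin ⟨le_of_lt hx.2, le_rfl⟩)⟩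
  have hga : gfun μ b ≤ gfun μ a := by
    haveI hne : (𝓝[Ioo a b] a).NeBot := by
      apply mem_closure_iff_nhdsWithin_neBot.1
      rw [closure_Ioo (ne_of_lt hab)]
      exact ⟨le_rfl, le_of_lt hab⟩
    exact ge_of_tendsto ((gfun_cont μ).continuousWithinAt)
      (eventually_nhdsWithin_of_forall hstep)
  have h2 : 2 * (b - a) ≤ cdf μ b - cdf μ a := by
    simp only [gfun] at hga
    linarith
  calc ENNReal.ofReal (2 * (b - a)) ≤ ENNReal.ofReal (cdf μ b - cdf μ a) :=
        ENNReal.ofReal_le_ofReal h2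
  _ = μ (Ioc a b) := (measure_Ioc_eq μ (le_of_lt hab)).symm
  _ = μ (Ioo a b) := (measure_congr (Ioo_ae_eq_Ioc (μ := μ))).symm

end Stmt3Aux

open Stmt3Aux in
/-- Lemma 10 (single-point smart partition lemma): for any atomless Borel
probability measure on `[0,1]`, there is a point `x ∈ (0,1)` such that every
interval of length `η` ending or starting at `x` has mass at most `2η`. -/
theorem stmt_3 (μ : Measure ℝ) [IsProbabilityMeasure μ]
    (hμ1 : μ (Set.Icc (0 : ℝ) 1) = 1) (hatom : ∀ t : ℝ, μ {t} = 0) :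
    ∃ x ∈ Set.Ioo (0 : ℝ) 1, ∀ η > (0 : ℝ),
      μ (Set.Icc (x - η) x) ≤ ENNReal.ofReal (2 * η) ∧
      μ (Set.Icc x (x + η)) ≤ ENNReal.ofReal (2 * η) := by
  haveI : NullSingletonClass μ := ⟨hatom⟩
  have key : ∃ x ∈ Ioo (0:ℝ) 1, x ∉ badU μ ∧ x ∉ badV μ := by
    by_contra hcon
    push_neg at hcon
    have hcover : Ioo (0:ℝ) 1 ⊆ badU μ ∪ badV μ := by
      intro x hx
      rcases Classical.em (x ∈ badU μ) with h | h
      · exact Or.inl h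
      · exact Or.inr (hcon x hx h)
    have hU2 : 2 * volume (badU μ) ≤ μ (badU μ) :=
      cover_bound μ _ (badU_open μ) (badU_sub μ hμ1) (sunU μ)
    have hV2 : 2 * volume (badV μ) ≤ μ (badV μ) :=
      cover_bound μ _ (badV_open μ) (badV_sub μ hμ1) (sunV μ)
    have hVm : MeasurableSet (badV μ) := (badV_open μ).measurableSet
    have e1 : volume (badU μ ∪ badV μ) + volume (badU μ ∩ badV μ)
        = volume (badU μ) + volume (badV μ) := measure_union_add_inter _ hVm
    have e2 : μ (badU μ ∪ badV μ) + μ (badU μ ∩ badV μ)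
        = μ (badU μ) + μ (badV μ) := measure_union_add_inter _ hVm
    have h1 : (1:ℝ≥0∞) ≤ volume (badU μ ∪ badV μ) := by
      have hvol : volume (Ioo (0:ℝ) 1) = 1 := by
        rw [Real.volume_Ioo]; norm_num
      rw [← hvol]
      exact measure_mono hcover
    have hchain : (2:ℝ≥0∞) + 2 * volume (badU μ ∩ badV μ)
        ≤ 1 + μ (badU μ ∩ badV μ) := by
      have h2le : (2:ℝ≥0∞) ≤ 2 * volume (badU μ ∪ badV μ) := by
        calc (2:ℝ≥0∞) = 2 * 1 := by norm_num
        _ ≤ 2 * volume (badU μ ∪ badV μ) := mul_le_mul_right h1 2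
      calc (2:ℝ≥0∞) + 2 * volume (badU μ ∩ badV μ)
          ≤ 2 * volume (badU μ ∪ badV μ) + 2 * volume (badU μ ∩ badV μ) :=
            add_le_add_left h2le _
      _ = 2 * (volume (badU μ ∪ badV μ) + volume (badU μ ∩ badV μ)) := by ring
      _ = 2 * (volume (badU μ) + volume (badV μ)) := by rw [e1]
      _ = 2 * volume (badU μ) + 2 * volume (badV μ) := by ring
      _ ≤ μ (badU μ) + μ (badV μ) := add_le_add hU2 hV2
      _ = μ (badU μ ∪ badV μ) + μ (badU μ ∩ badV μ) := e2.symm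
      _ ≤ 1 + μ (badU μ ∩ badV μ) := add_le_add_left prob_le_one _
    have hv0 : volume (badU μ ∩ badV μ) = 0 := by
      have hle2 : (2:ℝ≥0∞) + 2 * volume (badU μ ∩ badV μ) ≤ 2 + 0 := by
        refine le_trans hchain ?_
        rw [add_zero]
        calc (1:ℝ≥0∞) + μ (badU μ ∩ badV μ) ≤ 1 + 1 := add_le_add_right prob_le_one _
        _ = 2 := by norm_num
      have := (ENNReal.add_le_add_iff_left (by norm_num : (2:ℝ≥0∞) ≠ ⊤)).1 hle2
      simpa using this
    have hempty : badU μ ∩ badV μ = ∅ := by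
      by_contra hne
      have hpos := ((badU_open μ).inter (badV_open μ)).measure_pos volume
        (nonempty_iff_ne_empty.2 hne)
      rw [hv0] at hpos
      exact lt_irrefl 0 hpos
    rw [hempty] at hchain
    simp only [measure_empty, mul_zero, add_zero] at hchain
    exact absurd hchain (by norm_num)
  obtain ⟨x, hx01, hxU, hxV⟩ := key
  refine ⟨x, hx01, fun η hη => ⟨?_, ?_⟩⟩
  · have hle : gfun μ (x - η) ≤ gfun μ x := by
      by_contra h
      exact hxU ⟨x - η, by linarith, not_le.1 h⟩
    have h2 : cdf μ x - cdf μ (x - η) ≤ 2 * η := by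
      simp only [gfun] at hle
      linarith
    calc μ (Icc (x - η) x) = μ (Ioc (x - η) x) := (measure_congr (Ioc_ae_eq_Icc (μ := μ))).symm
    _ = ENNReal.ofReal (cdf μ x - cdf μ (x - η)) := measure_Ioc_eq μ (by linarith)
    _ ≤ ENNReal.ofReal (2 * η) := ENNReal.ofReal_le_ofReal h2
  · have hle : gfun μ x ≤ gfun μ (x + η) := by
      by_contra h
      exact hxV ⟨x + η, by linarith, not_le.1 h⟩
    have h2 : cdf μ (x + η) - cdf μ x ≤ 2 * η := by
      simp only [gfun] at hle
      linarith
    calc μ (Icc x (x + η)) = μ (Ioc x (x + η)) := (measure_congr (Ioc_ae_eq_Icc (μ := μ))).symm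
    _ = ENNReal.ofReal (cdf μ (x + η) - cdf μ x) := measure_Ioc_eq μ (by linarith)
    _ ≤ ENNReal.ofReal (2 * η) := ENNReal.ofReal_le_ofReal h2
end

section
/- Let μ be a Borel probability measure on ℝ whose support is a finite subset of [0,1]. Then there exists a point x ∈ [0,1] such that for every η > 0, both μ([x−η, x]) ≤ 2η and μ([x, x+η]) ≤ 2η. -/
open MeasureTheory

noncomputable section LightAux

/-- Sum of weights of atoms of `s` in `[a,t]`. -/
def wLsum (s : Finset ℝ) (w : ℝ → ℝ) (a t : ℝ) : ℝ :=
  ∑ b ∈ s.filter (fun b => a ≤ b ∧ b ≤ t), w b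

def badSetL (s : Finset ℝ) (w : ℝ → ℝ) : Set ℝ :=
  {t | ∃ a ∈ s, a ≤ t ∧ 2 * (t - a) < wLsum s w a t}

def badSetR (s : Finset ℝ) (w : ℝ → ℝ) : Set ℝ :=
  {t | ∃ a ∈ s, t ≤ a ∧ 2 * (a - t) < wLsum s w t a}

lemma busyL (w : ℝ → ℝ) : ∀ (s : Finset ℝ), (∀ a ∈ s, 0 ≤ w a) →
    volume (badSetL s w) ≤ ENNReal.ofReal ((∑ a ∈ s, w a) / 2) := by
  intro s
  induction s using Finset.strongInduction with
  | _ s ih =>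
    intro hw
    rcases s.eq_empty_or_nonempty with rfl | hne
    · have : badSetL ∅ w = ∅ := by
        ext t; simp [badSetL]
      simp [this]
    by_cases hsplit : ∃ z ∈ s, (s.filter (fun b => b < z)).Nonempty ∧
        ∀ a ∈ s, a < z → ∑ b ∈ s.filter (fun b => a ≤ b ∧ b < z), w b ≤ 2 * (z - a)
    · obtain ⟨z, hz, hne1, hgood⟩ := hsplit
      set s₁ := s.filter (fun b => b < z) with hs₁
      set s₂ := s.filter (fun b => ¬ b < z) with hs₂
      have hsub : badSetL s w ⊆ badSetL s₁ w ∪ badSetL s₂ w := by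
        intro t ht
        obtain ⟨a, ha, hat, hlt⟩ := ht
        by_cases haz : z ≤ a
        · right
          have ha2 : a ∈ s₂ := by
            rw [hs₂, Finset.mem_filter]; exact ⟨ha, not_lt.mpr haz⟩
          have hsum : wLsum s₂ w a t = wLsum s w a t := by
            unfold wLsum
            rw [hs₂, Finset.filter_filter]
            refine Finset.sum_congr (Finset.filter_congr fun b _ => ?_) fun _ _ => rfl
            constructor
            · rintro ⟨_, h⟩; exact h
            · intro h; exact ⟨not_lt.mpr (le_trans haz h.1), h⟩
          exact ⟨a, ha2, hat, by rw [hsum]; exact hlt⟩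
        · push_neg at haz
          by_cases htz : t < z
          · left
            have ha1 : a ∈ s₁ := by simp [hs₁, ha, haz]
            have hsum : wLsum s₁ w a t = wLsum s w a t := by
              unfold wLsum
              rw [hs₁, Finset.filter_filter]
              refine Finset.sum_congr (Finset.filter_congr fun b _ => ?_) fun _ _ => rfl
              constructor
              · rintro ⟨_, h⟩; exact h
              · intro h; exact ⟨lt_of_le_of_lt h.2 htz, h⟩
            exact ⟨a, ha1, hat, by rw [hsum]; exact hlt⟩
          · push_neg at htz
            right
            have hdec : wLsum s w a t
                = (∑ b ∈ s.filter (fun b => a ≤ b ∧ b < z), w b)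
                  + (∑ b ∈ s₂.filter (fun b => b ≤ t), w b) := by
              unfold wLsum
              rw [← Finset.sum_filter_add_sum_filter_not
                (s.filter (fun b => a ≤ b ∧ b ≤ t)) (fun b => b < z)]
              congr 1
              · rw [Finset.filter_filter]
                refine Finset.sum_congr (Finset.filter_congr fun b _ => ?_) fun _ _ => rfl
                constructor
                · rintro ⟨⟨h1, _⟩, h3⟩; exact ⟨h1, h3⟩
                · rintro ⟨h1, h3⟩; exact ⟨⟨h1, le_trans (le_of_lt h3) htz⟩, h3⟩
              · rw [hs₂, Finset.filter_filter, Finset.filter_filter]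
                refine Finset.sum_congr (Finset.filter_congr fun b _ => ?_) fun _ _ => rfl
                constructor
                · rintro ⟨⟨_, h2⟩, h3⟩; exact ⟨h3, h2⟩
                · rintro ⟨h3, h2⟩
                  push_neg at h3
                  exact ⟨⟨le_trans (le_of_lt haz) h3, h2⟩, not_lt.mpr h3⟩
            have hkey : 2 * (t - z) < ∑ b ∈ s₂.filter (fun b => b ≤ t), w b := by
              have := hgood a ha haz
              rw [hdec] at hlt
              linarith
            have hTne : (s₂.filter (fun b => b ≤ t)).Nonempty := by
              by_contra hc
              rw [Finset.not_nonempty_iff_eq_empty] at hc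
              rw [hc] at hkey
              simp at hkey
              linarith
            set a' := (s₂.filter (fun b => b ≤ t)).min' hTne with ha'
            have ha'mem := (s₂.filter (fun b => b ≤ t)).min'_mem hTne
            rw [Finset.mem_filter] at ha'mem
            have ha's2 : a' ∈ s₂ := ha'mem.1
            have ha't : a' ≤ t := ha'mem.2
            have hza' : z ≤ a' := by
              have := ha's2
              rw [hs₂, Finset.mem_filter] at this
              exact not_lt.mp this.2
            have hsum' : wLsum s₂ w a' t = ∑ b ∈ s₂.filter (fun b => b ≤ t), w b := by
              unfold wLsum
              refine Finset.sum_congr (Finset.filter_congr fun b hb => ?_) fun _ _ => rfl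
              constructor
              · rintro ⟨_, h⟩; exact h
              · intro h
                refine ⟨?_, h⟩
                rw [ha']
                exact Finset.min'_le (s₂.filter (fun b => b ≤ t)) b
                  (by rw [Finset.mem_filter]; exact ⟨hb, h⟩)
            exact ⟨a', ha's2, ha't, by rw [hsum']; linarith⟩
      have hss1 : s₁ ⊂ s := by
        rw [hs₁, Finset.filter_ssubset]
        exact ⟨z, hz, lt_irrefl z⟩
      have hss2 : s₂ ⊂ s := by
        rw [hs₂, Finset.filter_ssubset]
        obtain ⟨y, hy⟩ := hne1
        rw [Finset.mem_filter] at hy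
        exact ⟨y, hy.1, not_not.mpr hy.2⟩
      have hw1 : ∀ a ∈ s₁, 0 ≤ w a := fun a ha => hw a (Finset.mem_of_mem_filter a ha)
      have hw2 : ∀ a ∈ s₂, 0 ≤ w a := fun a ha => hw a (Finset.mem_of_mem_filter a ha)
      calc volume (badSetL s w) ≤ volume (badSetL s₁ w ∪ badSetL s₂ w) := measure_mono hsub
        _ ≤ volume (badSetL s₁ w) + volume (badSetL s₂ w) := measure_union_le _ _
        _ ≤ ENNReal.ofReal ((∑ a ∈ s₁, w a) / 2) + ENNReal.ofReal ((∑ a ∈ s₂, w a) / 2) :=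
            add_le_add (ih s₁ hss1 hw1) (ih s₂ hss2 hw2)
        _ = ENNReal.ofReal ((∑ a ∈ s₁, w a) / 2 + (∑ a ∈ s₂, w a) / 2) := by
            rw [ENNReal.ofReal_add (div_nonneg (Finset.sum_nonneg hw1) (by norm_num))
              (div_nonneg (Finset.sum_nonneg hw2) (by norm_num))]
        _ = ENNReal.ofReal ((∑ a ∈ s, w a) / 2) := by
            congr 1
            have := Finset.sum_filter_add_sum_filter_not s (fun b => b < z) w
            rw [hs₁, hs₂]
            linarith
    · push_neg at hsplit
      set a₁ := s.min' hne with ha₁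
      have chain : ∀ n : ℕ, ∀ z ∈ s, (s.filter (fun b => b < z)).card ≤ n →
          2 * (z - a₁) ≤ ∑ b ∈ s.filter (fun b => b < z), w b := by
        intro n
        induction n with
        | zero =>
          intro z hz hcard
          have hemp : s.filter (fun b => b < z) = ∅ :=
            Finset.card_eq_zero.mp (Nat.le_zero.mp hcard)
          have hz1 : z = a₁ := by
            refine le_antisymm ?_ (s.min'_le z hz)
            by_contra h
            push_neg at h
            have : a₁ ∈ s.filter (fun b => b < z) :=
              Finset.mem_filter.mpr ⟨s.min'_mem hne, h⟩
            rw [hemp] at this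
            exact absurd this (Finset.notMem_empty _)
          rw [hemp, hz1]
          simp
        | succ n ihn =>
          intro z hz hcard
          rcases (s.filter (fun b => b < z)).eq_empty_or_nonempty with hemp | hne2
          · have hz1 : z = a₁ := by
              refine le_antisymm ?_ (s.min'_le z hz)
              by_contra h
              push_neg at h
              have : a₁ ∈ s.filter (fun b => b < z) :=
                Finset.mem_filter.mpr ⟨s.min'_mem hne, h⟩
              rw [hemp] at this
              exact absurd this (Finset.notMem_empty _)
            rw [hemp, hz1]
            simp
          · obtain ⟨a, ha, haz, hgt⟩ := hsplit z hz hne2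
            have hss : s.filter (fun b => b < a) ⊂ s.filter (fun b => b < z) := by
              constructor
              · intro b hb
                rw [Finset.mem_filter] at hb ⊢
                exact ⟨hb.1, lt_trans hb.2 haz⟩
              · intro hsub2
                have : a ∈ s.filter (fun b => b < a) :=
                  hsub2 (Finset.mem_filter.mpr ⟨ha, haz⟩)
                rw [Finset.mem_filter] at this
                exact lt_irrefl a this.2
            have hcard' : (s.filter (fun b => b < a)).card ≤ n :=
              Nat.lt_succ_iff.mp (lt_of_lt_of_le (Finset.card_lt_card hss) hcard)
            have IH := ihn a ha hcard'
            have hsum : ∑ b ∈ s.filter (fun b => b < z), w b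
                = (∑ b ∈ s.filter (fun b => b < a), w b)
                  + (∑ b ∈ s.filter (fun b => a ≤ b ∧ b < z), w b) := by
              rw [← Finset.sum_filter_add_sum_filter_not
                (s.filter (fun b => b < z)) (fun b => b < a)]
              congr 1
              · rw [Finset.filter_filter]
                refine Finset.sum_congr (Finset.filter_congr fun b _ => ?_) fun _ _ => rfl
                constructor
                · rintro ⟨_, h⟩; exact h
                · intro h; exact ⟨lt_trans h haz, h⟩
              · rw [Finset.filter_filter]
                refine Finset.sum_congr (Finset.filter_congr fun b _ => ?_) fun _ _ => rfl
                constructor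
                · rintro ⟨h1, h2⟩; exact ⟨not_lt.mp h2, h1⟩
                · rintro ⟨h1, h2⟩; exact ⟨h2, not_lt.mpr h1⟩
            linarith
      have hsubIco : badSetL s w ⊆ Set.Ico a₁ (a₁ + (∑ a ∈ s, w a) / 2) := by
        intro t ht
        obtain ⟨a, ha, hat, hlt⟩ := ht
        have ha1a : a₁ ≤ a := s.min'_le a ha
        have h1 : wLsum s w a t ≤ ∑ b ∈ s.filter (fun b => ¬ b < a), w b := by
          unfold wLsum
          refine Finset.sum_le_sum_of_subset_of_nonneg ?_ ?_
          · intro b hb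
            rw [Finset.mem_filter] at hb ⊢
            exact ⟨hb.1, not_lt.mpr hb.2.1⟩
          · intro b hb _
            exact hw b (Finset.mem_of_mem_filter b hb)
        have h2 : (∑ b ∈ s.filter (fun b => b < a), w b)
            + (∑ b ∈ s.filter (fun b => ¬ b < a), w b) = ∑ b ∈ s, w b :=
          Finset.sum_filter_add_sum_filter_not s _ w
        have h3 := chain s.card a ha (Finset.card_filter_le s _)
        constructor
        · linarith
        · linarith
      calc volume (badSetL s w) ≤ volume (Set.Ico a₁ (a₁ + (∑ a ∈ s, w a) / 2)) :=
            measure_mono hsubIco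
        _ = ENNReal.ofReal ((∑ a ∈ s, w a) / 2) := by
            rw [Real.volume_Ico]
            congr 1
            ring

lemma badR_reflect (s : Finset ℝ) (w : ℝ → ℝ) :
    badSetR s w = (fun t => -t) ⁻¹' badSetL (s.image (fun x => -x)) (fun x => w (-x)) := by
  ext t
  simp only [badSetR, badSetL, Set.mem_setOf_eq, Set.mem_preimage]
  constructor
  · rintro ⟨a, ha, hta, hlt⟩
    refine ⟨-a, Finset.mem_image_of_mem _ ha, by linarith, ?_⟩
    have hsum : wLsum (s.image (fun x => -x)) (fun x => w (-x)) (-a) (-t) = wLsum s w t a := by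
      unfold wLsum
      rw [Finset.filter_image]
      rw [Finset.sum_image (by intro x _ y _ h; linarith)]
      simp only [neg_neg]
      refine Finset.sum_congr (Finset.filter_congr fun b _ => ?_) fun _ _ => rfl
      constructor
      · rintro ⟨h1, h2⟩; exact ⟨by linarith, by linarith⟩
      · rintro ⟨h1, h2⟩; exact ⟨by linarith, by linarith⟩
    rw [hsum]
    linarith
  · rintro ⟨a', ha', hta, hlt⟩
    rw [Finset.mem_image] at ha'
    obtain ⟨a, ha, rfl⟩ := ha'
    refine ⟨a, ha, by linarith, ?_⟩
    have hsum : wLsum (s.image (fun x => -x)) (fun x => w (-x)) (-a) (-t) = wLsum s w t a := by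
      unfold wLsum
      rw [Finset.filter_image]
      rw [Finset.sum_image (by intro x _ y _ h; linarith)]
      simp only [neg_neg]
      refine Finset.sum_congr (Finset.filter_congr fun b _ => ?_) fun _ _ => rfl
      constructor
      · rintro ⟨h1, h2⟩; exact ⟨by linarith, by linarith⟩
      · rintro ⟨h1, h2⟩; exact ⟨by linarith, by linarith⟩
    rw [hsum] at hlt
    linarith

lemma busyR (s : Finset ℝ) (w : ℝ → ℝ) (hw : ∀ a ∈ s, 0 ≤ w a) :
    volume (badSetR s w) ≤ ENNReal.ofReal ((∑ a ∈ s, w a) / 2) := by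
  rw [badR_reflect]
  rw [MeasureTheory.Measure.measure_preimage_neg]
  have hw' : ∀ a ∈ s.image (fun x => -x), 0 ≤ (fun x => w (-x)) a := by
    intro a ha
    rw [Finset.mem_image] at ha
    obtain ⟨b, hb, rfl⟩ := ha
    simpa using hw b hb
  refine le_trans (busyL _ _ hw') ?_
  rw [Finset.sum_image (by intro x _ y _ h; linarith)]
  simp

lemma wLsum_mono_t (s : Finset ℝ) (w : ℝ → ℝ) (hw : ∀ a ∈ s, 0 ≤ w a)
    (a t t' : ℝ) (h : t ≤ t') : wLsum s w a t ≤ wLsum s w a t' := by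
  unfold wLsum
  refine Finset.sum_le_sum_of_subset_of_nonneg ?_ ?_
  · intro b hb
    rw [Finset.mem_filter] at hb ⊢
    exact ⟨hb.1, hb.2.1, le_trans hb.2.2 h⟩
  · intro b hb _
    exact hw b (Finset.mem_of_mem_filter b hb)

lemma wLsum_mono_a (s : Finset ℝ) (w : ℝ → ℝ) (hw : ∀ a ∈ s, 0 ≤ w a)
    (a a' t : ℝ) (h : a' ≤ a) : wLsum s w a t ≤ wLsum s w a' t := by
  unfold wLsum
  refine Finset.sum_le_sum_of_subset_of_nonneg ?_ ?_
  · intro b hb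
    rw [Finset.mem_filter] at hb ⊢
    exact ⟨hb.1, le_trans h hb.2.1, hb.2.2⟩
  · intro b hb _
    exact hw b (Finset.mem_of_mem_filter b hb)

lemma stickL (s : Finset ℝ) (w : ℝ → ℝ) (hw : ∀ a ∈ s, 0 ≤ w a)
    (h1 : (1 : ℝ) ∈ badSetL s w) :
    ∃ δ > (0 : ℝ), Set.Ioo (1 : ℝ) (1 + δ) ⊆ badSetL s w := by
  obtain ⟨a, ha, ha1, hlt⟩ := h1
  refine ⟨(wLsum s w a 1 - 2 * (1 - a)) / 2, by linarith, ?_⟩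
  intro t ht
  obtain ⟨ht1, ht2⟩ := ht
  refine ⟨a, ha, by linarith, ?_⟩
  have := wLsum_mono_t s w hw a 1 t (le_of_lt ht1)
  linarith

lemma stickR (s : Finset ℝ) (w : ℝ → ℝ) (hw : ∀ a ∈ s, 0 ≤ w a)
    (h0 : (0 : ℝ) ∈ badSetR s w) :
    ∃ δ > (0 : ℝ), Set.Ioo (-δ) (0 : ℝ) ⊆ badSetR s w := by
  obtain ⟨a, ha, ha0, hlt⟩ := h0
  refine ⟨(wLsum s w 0 a - 2 * (a - 0)) / 2, by linarith, ?_⟩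
  intro t ht
  obtain ⟨ht1, ht2⟩ := ht
  refine ⟨a, ha, by linarith, ?_⟩
  have := wLsum_mono_a s w hw 0 t a (le_of_lt ht2)
  linarith

lemma discrete_main (s : Finset ℝ) (w : ℝ → ℝ) (hw : ∀ a ∈ s, 0 ≤ w a)
    (hs : (s : Set ℝ) ⊆ Set.Icc (0 : ℝ) 1) (hsum1 : ∑ a ∈ s, w a ≤ 1) :
    ∃ x ∈ Set.Icc (0 : ℝ) 1, x ∉ badSetL s w ∧ x ∉ badSetR s w := by
  have hR1 : (1 : ℝ) ∈ badSetR s w → (1 : ℝ) ∈ badSetL s w := by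
    rintro ⟨a, ha, h1a, hlt⟩
    have ha1 : a = 1 := le_antisymm (hs ha).2 h1a
    subst ha1
    exact ⟨1, ha, le_refl _, by simpa using hlt⟩
  have hL0 : (0 : ℝ) ∈ badSetL s w → (0 : ℝ) ∈ badSetR s w := by
    rintro ⟨a, ha, ha0, hlt⟩
    have ha1 : a = 0 := le_antisymm ha0 (hs ha).1
    subst ha1
    exact ⟨0, ha, le_refl _, by simpa using hlt⟩
  by_cases h1 : (1 : ℝ) ∈ badSetL s w
  · by_cases h0 : (0 : ℝ) ∈ badSetR s w
    · -- both endpoints bad; measure contradiction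
      by_contra hcon
      push_neg at hcon
      have hcover : Set.Icc (0:ℝ) 1 ⊆ (badSetL s w ∩ Set.Icc 0 1) ∪ (badSetR s w ∩ Set.Icc 0 1) := by
        intro x hx
        rcases Classical.em (x ∈ badSetL s w) with h | h
        · exact Or.inl ⟨h, hx⟩
        · exact Or.inr ⟨hcon x hx h, hx⟩
      obtain ⟨δ₁, hδ₁, hsub1⟩ := stickL s w hw h1
      obtain ⟨δ₂, hδ₂, hsub2⟩ := stickR s w hw h0
      have hv1 : volume (badSetL s w ∩ Set.Icc 0 1) + ENNReal.ofReal δ₁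
          ≤ ENNReal.ofReal (1 / 2) := by
        have hd : Disjoint (badSetL s w ∩ Set.Icc 0 1) (Set.Ioo (1:ℝ) (1 + δ₁)) := by
          rw [Set.disjoint_left]
          rintro x ⟨_, _, hx2⟩ ⟨hx3, _⟩
          linarith
        calc volume (badSetL s w ∩ Set.Icc 0 1) + ENNReal.ofReal δ₁
            = volume (badSetL s w ∩ Set.Icc 0 1) + volume (Set.Ioo (1:ℝ) (1 + δ₁)) := by
              rw [Real.volume_Ioo]; norm_num
          _ = volume ((badSetL s w ∩ Set.Icc 0 1) ∪ Set.Ioo (1:ℝ) (1 + δ₁)) :=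
              (measure_union hd measurableSet_Ioo).symm
          _ ≤ volume (badSetL s w) := by
              refine measure_mono ?_
              rintro x (⟨hx, _⟩ | hx)
              · exact hx
              · exact hsub1 hx
          _ ≤ ENNReal.ofReal ((∑ a ∈ s, w a) / 2) := busyL w s hw
          _ ≤ ENNReal.ofReal (1 / 2) := ENNReal.ofReal_le_ofReal (by linarith)
      have hv2 : volume (badSetR s w ∩ Set.Icc 0 1) + ENNReal.ofReal δ₂
          ≤ ENNReal.ofReal (1 / 2) := by
        have hd : Disjoint (badSetR s w ∩ Set.Icc 0 1) (Set.Ioo (-δ₂) (0:ℝ)) := by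
          rw [Set.disjoint_left]
          rintro x ⟨_, hx2, _⟩ ⟨_, hx3⟩
          linarith
        calc volume (badSetR s w ∩ Set.Icc 0 1) + ENNReal.ofReal δ₂
            = volume (badSetR s w ∩ Set.Icc 0 1) + volume (Set.Ioo (-δ₂) (0:ℝ)) := by
              rw [Real.volume_Ioo]; norm_num
          _ = volume ((badSetR s w ∩ Set.Icc 0 1) ∪ Set.Ioo (-δ₂) (0:ℝ)) :=
              (measure_union hd measurableSet_Ioo).symm
          _ ≤ volume (badSetR s w) := by
              refine measure_mono ?_
              rintro x (⟨hx, _⟩ | hx)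
              · exact hx
              · exact hsub2 hx
          _ ≤ ENNReal.ofReal ((∑ a ∈ s, w a) / 2) := busyR s w hw
          _ ≤ ENNReal.ofReal (1 / 2) := ENNReal.ofReal_le_ofReal (by linarith)
      have hbig : (1 : ENNReal) + (ENNReal.ofReal δ₁ + ENNReal.ofReal δ₂)
          ≤ (1 : ENNReal) + 0 := by
        have hIcc : volume (Set.Icc (0:ℝ) 1) = 1 := by
          rw [Real.volume_Icc]; norm_num
        calc (1 : ENNReal) + (ENNReal.ofReal δ₁ + ENNReal.ofReal δ₂)
            ≤ (volume (badSetL s w ∩ Set.Icc 0 1) + volume (badSetR s w ∩ Set.Icc 0 1))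
              + (ENNReal.ofReal δ₁ + ENNReal.ofReal δ₂) := by
              refine add_le_add ?_ le_rfl
              rw [← hIcc]
              exact le_trans (measure_mono hcover) (measure_union_le _ _)
          _ = (volume (badSetL s w ∩ Set.Icc 0 1) + ENNReal.ofReal δ₁)
              + (volume (badSetR s w ∩ Set.Icc 0 1) + ENNReal.ofReal δ₂) := by ring
          _ ≤ ENNReal.ofReal (1 / 2) + ENNReal.ofReal (1 / 2) := add_le_add hv1 hv2
          _ = (1 : ENNReal) + 0 := by
              rw [← ENNReal.ofReal_add (by norm_num) (by norm_num)]
              norm_num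
      have := (ENNReal.add_le_add_iff_left (by norm_num : (1:ENNReal) ≠ ⊤)).mp hbig
      have hle := nonpos_iff_eq_zero.mp this
      have : ENNReal.ofReal δ₁ = 0 := by
        have h0' : ENNReal.ofReal δ₁ ≤ 0 := le_trans le_self_add (le_of_eq hle)
        exact nonpos_iff_eq_zero.mp h0'
      rw [ENNReal.ofReal_eq_zero] at this
      linarith
    · -- 0 is good
      exact ⟨0, Set.mem_Icc.mpr ⟨le_refl _, by norm_num⟩, fun h => h0 (hL0 h), h0⟩
  · -- 1 is good
    exact ⟨1, Set.mem_Icc.mpr ⟨by norm_num, le_refl _⟩, h1, fun h => h1 (hR1 h)⟩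

lemma measure_finset_sum (μ : Measure ℝ) (t : Finset ℝ) :
    μ ↑t = ∑ b ∈ t, μ {b} := by
  classical
  induction t using Finset.induction_on with
  | empty => simp
  | @insert a t ha ih =>
    rw [Finset.coe_insert, Set.insert_eq,
      measure_union (Set.disjoint_singleton_left.mpr (by simpa using ha)) t.measurableSet,
      ih, Finset.sum_insert ha]

lemma goodL_bound (s : Finset ℝ) (w : ℝ → ℝ) (hw : ∀ a ∈ s, 0 ≤ w a)
    (x η : ℝ) (hη : 0 < η) (hxL : x ∉ badSetL s w) :
    ∑ b ∈ s.filter (fun b => x - η ≤ b ∧ b ≤ x), w b ≤ 2 * η := by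
  rcases (s.filter (fun b => x - η ≤ b ∧ b ≤ x)).eq_empty_or_nonempty with he | hne
  · rw [he]
    simp only [Finset.sum_empty]
    linarith
  · have hmem := Finset.mem_filter.mp ((s.filter (fun b => x - η ≤ b ∧ b ≤ x)).min'_mem hne)
    have ha₀s := hmem.1
    have ha₀l := hmem.2.1
    have ha₀r := hmem.2.2
    have hgood : wLsum s w ((s.filter (fun b => x - η ≤ b ∧ b ≤ x)).min' hne) x
        ≤ 2 * (x - (s.filter (fun b => x - η ≤ b ∧ b ≤ x)).min' hne) := by
      by_contra hcon
      push_neg at hcon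
      exact hxL ⟨_, ha₀s, ha₀r, hcon⟩
    have hTsum : ∑ b ∈ s.filter (fun b => x - η ≤ b ∧ b ≤ x), w b
        = wLsum s w ((s.filter (fun b => x - η ≤ b ∧ b ≤ x)).min' hne) x := by
      unfold wLsum
      refine Finset.sum_congr (Finset.filter_congr fun b hb => ?_) fun _ _ => rfl
      constructor
      · rintro ⟨h1, h2⟩
        exact ⟨Finset.min'_le _ b (Finset.mem_filter.mpr ⟨hb, h1, h2⟩), h2⟩
      · rintro ⟨h1, h2⟩
        exact ⟨by linarith, h2⟩
    rw [hTsum]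
    linarith

lemma goodR_bound (s : Finset ℝ) (w : ℝ → ℝ) (hw : ∀ a ∈ s, 0 ≤ w a)
    (x η : ℝ) (hη : 0 < η) (hxR : x ∉ badSetR s w) :
    ∑ b ∈ s.filter (fun b => x ≤ b ∧ b ≤ x + η), w b ≤ 2 * η := by
  rcases (s.filter (fun b => x ≤ b ∧ b ≤ x + η)).eq_empty_or_nonempty with he | hne
  · rw [he]
    simp only [Finset.sum_empty]
    linarith
  · have hmem := Finset.mem_filter.mp ((s.filter (fun b => x ≤ b ∧ b ≤ x + η)).max'_mem hne)
    have ha₀s := hmem.1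
    have ha₀l := hmem.2.1
    have ha₀r := hmem.2.2
    have hgood : wLsum s w x ((s.filter (fun b => x ≤ b ∧ b ≤ x + η)).max' hne)
        ≤ 2 * ((s.filter (fun b => x ≤ b ∧ b ≤ x + η)).max' hne - x) := by
      by_contra hcon
      push_neg at hcon
      exact hxR ⟨_, ha₀s, ha₀l, hcon⟩
    have hTsum : ∑ b ∈ s.filter (fun b => x ≤ b ∧ b ≤ x + η), w b
        = wLsum s w x ((s.filter (fun b => x ≤ b ∧ b ≤ x + η)).max' hne) := by
      unfold wLsum
      refine Finset.sum_congr (Finset.filter_congr fun b hb => ?_) fun _ _ => rfl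
      constructor
      · rintro ⟨h1, h2⟩
        exact ⟨h1, Finset.le_max' _ b (Finset.mem_filter.mpr ⟨hb, h1, h2⟩)⟩
      · rintro ⟨h1, h2⟩
        exact ⟨h1, by linarith⟩
    rw [hTsum]
    linarith

end LightAux

/-- Existence portion of the corollary in Appendix B: for a Borel probability
measure on `ℝ` whose support is a finite subset of `[0,1]`, there is a point
`x ∈ [0,1]` such that every interval of length `η` ending or starting at `x`
has mass at most `2η`. -/
theorem stmt_5 (μ : Measure ℝ) [IsProbabilityMeasure μ]
    (s : Finset ℝ) (hs : (s : Set ℝ) ⊆ Set.Icc (0 : ℝ) 1)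
    (hsupp : μ ((s : Set ℝ)ᶜ) = 0) :
    ∃ x ∈ Set.Icc (0 : ℝ) 1, ∀ η > (0 : ℝ),
      μ (Set.Icc (x - η) x) ≤ ENNReal.ofReal (2 * η) ∧
      μ (Set.Icc x (x + η)) ≤ ENNReal.ofReal (2 * η) := by
  classical
  set w : ℝ → ℝ := fun b => (μ {b}).toReal with hwdef
  have hw : ∀ a ∈ s, 0 ≤ w a := fun a _ => ENNReal.toReal_nonneg
  have hEq : ∀ (E : Set ℝ), ∀ t : Finset ℝ, ↑t = E ∩ ↑s →
      μ E = ENNReal.ofReal (∑ b ∈ t, w b) := by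
    intro E t ht
    have h1 : μ E = μ (E ∩ ↑s) := by
      refine le_antisymm ?_ (measure_mono Set.inter_subset_left)
      calc μ E ≤ μ (E ∩ ↑s) + μ (E \ ↑s) := measure_le_inter_add_diff μ E ↑s
        _ ≤ μ (E ∩ ↑s) + μ ((↑s)ᶜ) := by
            refine add_le_add le_rfl (measure_mono ?_)
            intro y hy
            exact hy.2
        _ = μ (E ∩ ↑s) := by rw [hsupp, add_zero]
    rw [h1, ← ht, measure_finset_sum]
    rw [ENNReal.ofReal_sum_of_nonneg (fun b _ => ENNReal.toReal_nonneg)]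
    exact Finset.sum_congr rfl fun b _ => (ENNReal.ofReal_toReal (measure_ne_top μ {b})).symm
  have hsum1 : ∑ a ∈ s, w a ≤ 1 := by
    have h1 : μ Set.univ = ENNReal.ofReal (∑ b ∈ s, w b) :=
      hEq Set.univ s (by simp)
    rw [measure_univ] at h1
    have h3 := congrArg ENNReal.toReal h1
    rw [ENNReal.toReal_one, ENNReal.toReal_ofReal (Finset.sum_nonneg hw)] at h3
    linarith [le_of_eq h3.symm]
  obtain ⟨x, hx, hxL, hxR⟩ := discrete_main s w hw hs hsum1
  refine ⟨x, hx, fun η hη => ⟨?_, ?_⟩⟩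
  · have hTeq : ↑(s.filter (fun b => x - η ≤ b ∧ b ≤ x)) = Set.Icc (x - η) x ∩ ↑s := by
      ext b
      simp only [Finset.coe_filter, Set.mem_setOf_eq, Set.mem_inter_iff, Set.mem_Icc,
        Finset.mem_coe]
      tauto
    rw [hEq (Set.Icc (x - η) x) _ hTeq]
    exact ENNReal.ofReal_le_ofReal (goodL_bound s w hw x η hη hxL)
  · have hTeq : ↑(s.filter (fun b => x ≤ b ∧ b ≤ x + η)) = Set.Icc x (x + η) ∩ ↑s := by
      ext b
      simp only [Finset.coe_filter, Set.mem_setOf_eq, Set.mem_inter_iff, Set.mem_Icc,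
        Finset.mem_coe]
      tauto
    rw [hEq (Set.Icc x (x + η)) _ hTeq]
    exact ENNReal.ofReal_le_ofReal (goodR_bound s w hw x η hη hxR)
end

section
/- Let m ≥ 1 and let x_1, ..., x_m be independent, uniformly distributed random points in 𝔽₂^m. Then the probability that x_1, ..., x_m are affinely independent over 𝔽₂ is at least 1/2 + 2^{-m}. -/
open Finset

section Aux

variable {K W : Type*} [Field K] [AddCommGroup W] [Module K W]

lemma my_step_aux {n : ℕ} (x : Fin (n + 1) → W)
    (h1 : AffineIndependent K (x ∘ Fin.castSucc))
    (h2 : x (Fin.last n) ∉ affineSpan K (x '' {i | i ≠ Fin.last n})) :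
    AffineIndependent K x := by
  refine AffineIndependent.affineIndependent_of_notMem_span (i := Fin.last n) ?_ h2
  let e : Fin n ≃ { y : Fin (n + 1) // y ≠ Fin.last n } :=
    { toFun := fun i => ⟨i.castSucc, (Fin.castSucc_lt_last i).ne⟩
      invFun := fun y => y.1.castPred y.2
      left_inv := fun i => by simp
      right_inv := fun y => by simp [Fin.castSucc_castPred] }
  have := (affineIndependent_equiv (k := K) e
      (p := fun z : { y : Fin (n + 1) // y ≠ Fin.last n } => x z)).1 ?_
  · exact this
  · exact h1

lemma my_chain_aux : ∀ {n : ℕ} (x : Fin n → W),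
    (∀ j : Fin n, x j ∉ affineSpan K (x '' {i | i < j})) → AffineIndependent K x := by
  intro n
  induction n with
  | zero => intro x _; exact affineIndependent_of_subsingleton K x
  | succ n ih =>
    intro x h
    refine my_step_aux x (ih (x ∘ Fin.castSucc) ?_) ?_
    · intro j
      have hset : (x ∘ Fin.castSucc) '' {i : Fin n | i < j}
          = x '' {i : Fin (n + 1) | i < j.castSucc} := by
        ext v
        constructor
        · rintro ⟨i, hi, rfl⟩; exact ⟨i.castSucc, by simpa using hi, rfl⟩
        · rintro ⟨i, hi, rfl⟩
          have hlt : i < Fin.last n := lt_of_lt_of_le hi (Fin.le_last _)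
          refine ⟨i.castPred (Fin.lt_last_iff_ne_last.1 hlt), ?_, ?_⟩
          · exact (Fin.castPred_lt_iff _).2 hi
          · simp [Function.comp, Fin.castSucc_castPred]
      rw [hset]
      exact h j.castSucc
    · have hset : {i : Fin (n + 1) | i ≠ Fin.last n} = {i | i < Fin.last n} := by
        ext i; exact Fin.lt_last_iff_ne_last.symm
      rw [hset]
      exact h (Fin.last n)

end Aux

open scoped Classical in
lemma my_span_card {V : Type*} [AddCommGroup V] [Module (ZMod 2) V] [Fintype V]
    (t : Finset V) :
    (univ.filter (· ∈ Submodule.span (ZMod 2) (t : Set V))).card ≤ 2 ^ t.card := by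
  have hsub : univ.filter (· ∈ Submodule.span (ZMod 2) (t : Set V)) ⊆
      t.powerset.image (fun s => ∑ v ∈ s, v) := by
    intro v hv
    simp only [mem_filter, mem_univ, true_and] at hv
    obtain ⟨f, -, hf⟩ := Submodule.mem_span_finset.1 hv
    refine mem_image.2 ⟨t.filter (fun i => f i = 1), mem_powerset.2 (filter_subset _ _), ?_⟩
    rw [← hf, sum_filter]
    refine sum_congr rfl fun i _ => ?_
    rcases (show ∀ a : ZMod 2, a = 0 ∨ a = 1 by decide) (f i) with h | h <;>
      simp [h]
  calc (univ.filter (· ∈ Submodule.span (ZMod 2) (t : Set V))).card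
      ≤ (t.powerset.image (fun s => ∑ v ∈ s, v)).card := card_le_card hsub
    _ ≤ t.powerset.card := card_image_le
    _ = 2 ^ t.card := card_powerset t

open scoped Classical in
lemma my_affine_card {m : ℕ} (x : Fin m → (Fin m → ZMod 2)) (j : Fin m) (hj : 0 < j.val) :
    (univ.filter (fun v : Fin m → ZMod 2 =>
        v ∈ affineSpan (ZMod 2) (x '' {i | i < j}))).card ≤ 2 ^ (j.val - 1) := by
  have hm : 0 < m := j.pos
  set z : Fin m := ⟨0, hm⟩ with hz
  have hzj : z < j := by simpa [Fin.lt_def, hz] using hj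
  set t : Finset (Fin m → ZMod 2) :=
    (univ.filter (fun i : Fin m => z < i ∧ i < j)).image (fun i => x i - x z) with ht
  have htcard : t.card ≤ j.val - 1 := by
    calc t.card ≤ (univ.filter (fun i : Fin m => z < i ∧ i < j)).card := card_image_le
      _ ≤ (Finset.Ioo (0 : ℕ) j.val).card := by
          apply card_le_card_of_injOn (fun i => i.val)
          · intro i hi
            simp only [Finset.mem_coe, mem_filter, mem_univ, true_and] at hi
            rw [Finset.mem_coe, Finset.mem_Ioo]
            exact ⟨hi.1, hi.2⟩
          · intro a _ b _ hab; exact Fin.val_injective hab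
      _ = j.val - 1 := by rw [Nat.card_Ioo]; omega
  have hspan : affineSpan (ZMod 2) (x '' {i | i < j}) ≤
      AffineSubspace.mk' (x z) (Submodule.span (ZMod 2) (t : Set (Fin m → ZMod 2))) := by
    rw [affineSpan_le]
    rintro v ⟨i, hi, rfl⟩
    by_cases hiz : i = z
    · subst hiz; exact AffineSubspace.self_mem_mk' _ _
    · have hzi : z < i := by
        rcases lt_or_ge z i with h | h
        · exact h
        · exact absurd (le_antisymm h (by simp [hz, Fin.le_def])) hiz
      have : x i - x z ∈ t := mem_image.2 ⟨i, mem_filter.2 ⟨mem_univ _, hzi, hi⟩, rfl⟩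
      have hmem : x i - x z ∈ Submodule.span (ZMod 2) (t : Set (Fin m → ZMod 2)) :=
        Submodule.subset_span this
      exact (AffineSubspace.mem_mk').2 (by simpa using hmem)
  calc (univ.filter (fun v : Fin m → ZMod 2 =>
          v ∈ affineSpan (ZMod 2) (x '' {i | i < j}))).card
      ≤ (univ.filter
          (· ∈ Submodule.span (ZMod 2) (t : Set (Fin m → ZMod 2)))).card := by
        apply card_le_card_of_injOn (fun v => v - x z)
        · intro v hv
          simp only [Finset.mem_coe, mem_filter, mem_univ, true_and] at hv ⊢
          have := (AffineSubspace.mem_mk').1 (hspan hv)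
          simpa using this
        · intro a _ b _ hab
          simpa using congrArg (fun w => w + x z) hab
    _ ≤ 2 ^ t.card := my_span_card t
    _ ≤ 2 ^ (j.val - 1) := Nat.pow_le_pow_right (by norm_num) htcard


open scoped Classical in
/-- In the linear classification model `LC_m`, the first `m` uniformly random
samples are affinely independent (all "novel") with probability at least
`1/2 + 2^{-m}`. -/
theorem stmt_10 (m : ℕ) (hm : 1 ≤ m) :
    (1 : ℝ) / 2 + (2 : ℝ) ^ (-(m : ℤ)) ≤
      ((Finset.univ.filter
          (fun x : Fin m → (Fin m → ZMod 2) =>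
            AffineIndependent (ZMod 2) x)).card : ℝ) / 2 ^ (m * m) := by
  obtain ⟨n, rfl⟩ : ∃ n, m = n + 1 := ⟨m - 1, by omega⟩
  set m := n + 1 with hmn
  set G : Finset (Fin m → (Fin m → ZMod 2)) :=
    univ.filter (fun x => AffineIndependent (ZMod 2) x) with hG
  set Bad : Fin m → Finset (Fin m → (Fin m → ZMod 2)) := fun j =>
    univ.filter (fun x => x j ∈ affineSpan (ZMod 2) (x '' {i | i < j})) with hBad
  -- cover
  have hcover : (univ : Finset (Fin m → (Fin m → ZMod 2))) ⊆ G ∪ univ.biUnion Bad := by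
    intro x _
    rw [mem_union]
    by_cases hx : AffineIndependent (ZMod 2) x
    · exact Or.inl (mem_filter.2 ⟨mem_univ _, hx⟩)
    · right
      rw [mem_biUnion]
      by_contra hc
      push_neg at hc
      apply hx
      apply my_chain_aux x
      intro j hj
      have hcj := hc j (mem_univ j)
      simp only [hBad, mem_filter, mem_univ, true_and] at hcj
      exact hcj hj
  -- cardinality of the whole space
  have hXcard : (univ : Finset (Fin m → (Fin m → ZMod 2))).card = 2 ^ (m * m) := by
    rw [card_univ, Fintype.card_fun]
    simp [Fintype.card_fun, ZMod.card, pow_mul]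
  -- bad sets with j = 0 are empty
  have hBad0 : ∀ j : Fin m, j.val = 0 → Bad j = ∅ := by
    intro j hj
    ext x
    simp only [hBad, mem_filter, mem_univ, true_and, notMem_empty, iff_false]
    have : {i : Fin m | i < j} = ∅ := by
      ext i
      simp only [Set.mem_setOf_eq, Set.mem_empty_iff_false, iff_false]
      intro hij
      exact absurd (Fin.lt_def.1 hij) (by omega)
    rw [this, Set.image_empty, AffineSubspace.span_empty]
    intro hmem
    have hmem' : x j ∈ ((⊥ : AffineSubspace (ZMod 2) (Fin m → ZMod 2)) :
        Set (Fin m → ZMod 2)) := hmem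
    rw [AffineSubspace.bot_coe] at hmem'
    exact hmem'
  -- counting each bad set
  have hBadCard : ∀ j : Fin m, 0 < j.val →
      (Bad j).card ≤ 2 ^ (j.val - 1) * 2 ^ (m * n) := by
    intro j hj
    have hmain := Finset.card_le_mul_card_image
      (f := fun (x : Fin m → (Fin m → ZMod 2)) => fun i : {i : Fin m // i ≠ j} => x i.1)
      (Bad j) (2 ^ (j.val - 1)) ?_
    · refine hmain.trans ?_
      have himg : ((Bad j).image
          (fun (x : Fin m → (Fin m → ZMod 2)) => fun i : {i : Fin m // i ≠ j} => x i.1)).card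
          ≤ 2 ^ (m * n) := by
        refine (card_le_card (subset_univ _)).trans ?_
        rw [card_univ, Fintype.card_fun]
        have h1 : Fintype.card {i : Fin m // i ≠ j} = n := by
          rw [Fintype.card_subtype_compl]
          simp [hmn]
        have h2 : Fintype.card (Fin m → ZMod 2) = 2 ^ m := by
          simp [Fintype.card_fun, ZMod.card]
        rw [h1, h2, ← pow_mul]
      exact Nat.mul_le_mul_left _ himg
    · -- fiber bound
      intro b hb
      obtain ⟨x0, hx0, hbx0⟩ := mem_image.1 hb
      have hx0' : x0 j ∈ affineSpan (ZMod 2) (x0 '' {i | i < j}) := by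
        simpa [hBad] using hx0
      refine (Finset.card_le_card_of_injOn (fun x => x j)
        (t := univ.filter (fun v : Fin m → ZMod 2 =>
          v ∈ affineSpan (ZMod 2) (x0 '' {i | i < j}))) ?_ ?_).trans
        (my_affine_card x0 j hj)
      · intro x hx
        simp only [Finset.mem_coe, mem_filter] at hx
        obtain ⟨hxB, hxb⟩ := hx
        have hagree : ∀ i : Fin m, i ≠ j → x i = x0 i := by
          intro i hij
          have := hxb.trans hbx0.symm
          exact congrFun this ⟨i, hij⟩
        have hximg : x '' {i | i < j} = x0 '' {i | i < j} := by
          ext v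
          constructor
          · rintro ⟨i, hi, rfl⟩; exact ⟨i, hi, (hagree i hi.ne).symm⟩
          · rintro ⟨i, hi, rfl⟩; exact ⟨i, hi, hagree i hi.ne⟩
        have hxmem : x j ∈ affineSpan (ZMod 2) (x0 '' {i | i < j}) := by
          have := (by simpa [hBad] using hxB :
            x j ∈ affineSpan (ZMod 2) (x '' {i | i < j}))
          rwa [hximg] at this
        simp only [Finset.mem_coe, mem_filter, mem_univ, true_and]
        exact hxmem
      · intro a ha b' hb' hab
        simp only [Finset.mem_coe, mem_filter] at ha hb'
        funext i
        by_cases hij : i = j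
        · subst hij; exact hab
        · have h1 := congrFun (ha.2.trans hbx0.symm) ⟨i, hij⟩
          have h2 := congrFun (hb'.2.trans hbx0.symm) ⟨i, hij⟩
          exact h1.trans h2.symm
  -- sum the bad bounds
  have hsum : ∑ j : Fin m, (Bad j).card ≤ (∑ i ∈ range n, 2 ^ i) * 2 ^ (m * n) := by
    have h1 : ∑ j : Fin m, (Bad j).card ≤
        ∑ j : Fin m, (if j.val = 0 then 0 else 2 ^ (j.val - 1) * 2 ^ (m * n)) := by
      refine Finset.sum_le_sum fun j _ => ?_
      by_cases hj : j.val = 0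
      · simp [hj, hBad0 j hj]
      · simpa [hj] using hBadCard j (Nat.pos_of_ne_zero hj)
    refine h1.trans ?_
    rw [Fin.sum_univ_eq_sum_range (fun k => if k = 0 then 0 else 2 ^ (k - 1) * 2 ^ (m * n)) m]
    rw [hmn, Finset.sum_range_succ']
    simp [Finset.sum_mul]
  -- main counting inequality over ℕ
  have hmainN : 2 ^ (m * m) ≤ G.card + (∑ i ∈ range n, 2 ^ i) * 2 ^ (m * n) := by
    calc 2 ^ (m * m) = (univ : Finset (Fin m → (Fin m → ZMod 2))).card := hXcard.symm
      _ ≤ (G ∪ univ.biUnion Bad).card := card_le_card hcover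
      _ ≤ G.card + (univ.biUnion Bad).card := card_union_le _ _
      _ ≤ G.card + ∑ j : Fin m, (Bad j).card :=
          Nat.add_le_add_left (card_biUnion_le) _
      _ ≤ G.card + (∑ i ∈ range n, 2 ^ i) * 2 ^ (m * n) := Nat.add_le_add_left hsum _
  -- pass to ℝ
  have h2pos : (0 : ℝ) < 2 ^ (m * m) := by positivity
  rw [le_div_iff₀ h2pos]
  have hcast : ((2 : ℝ) ^ (m * m)) ≤ (G.card : ℝ) + ((2 : ℝ) ^ n - 1) * 2 ^ (m * n) := by
    have := hmainN
    have hgeo : ((∑ i ∈ range n, 2 ^ i : ℕ) : ℝ) = (2 : ℝ) ^ n - 1 := by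
      push_cast
      rw [geom_sum_eq (by norm_num : (2:ℝ) ≠ 1)]
      ring
    calc ((2 : ℝ) ^ (m * m)) = ((2 ^ (m * m) : ℕ) : ℝ) := by push_cast; ring
      _ ≤ ((G.card + (∑ i ∈ range n, 2 ^ i) * 2 ^ (m * n) : ℕ) : ℝ) := by
          exact_mod_cast this
      _ = (G.card : ℝ) + ((∑ i ∈ range n, 2 ^ i : ℕ) : ℝ) * 2 ^ (m * n) := by push_cast; ring
      _ = (G.card : ℝ) + ((2 : ℝ) ^ n - 1) * 2 ^ (m * n) := by rw [hgeo]
  have hzpow : (2 : ℝ) ^ (-(m : ℤ)) = ((2 : ℝ) ^ m)⁻¹ := by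
    rw [zpow_neg, zpow_natCast]
  rw [hzpow]
  have hexp : m * m = m * n + n + 1 := by rw [hmn]; ring
  have hpow : (2 : ℝ) ^ (m * m) = 2 ^ (m * n) * 2 ^ n * 2 := by
    rw [hexp, pow_add, pow_add, pow_one]
  have hpowm : (2 : ℝ) ^ m = 2 ^ n * 2 := by
    rw [hmn, pow_succ]
  have hA : (0 : ℝ) < 2 ^ (m * n) := by positivity
  have hB : (0 : ℝ) < 2 ^ n := by positivity
  have key : (1 / 2 + ((2 : ℝ) ^ m)⁻¹) * 2 ^ (m * m)
      = 2 ^ (m * m) - ((2 : ℝ) ^ n - 1) * 2 ^ (m * n) := by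
    rw [hpow, hpowm]
    field_simp
    ring
  rw [key]
  linarith [hcast]
end

section
/- Let m ≥ 1, n ≥ 1, and let x_1, ..., x_n be independent, uniformly distributed random points in 𝔽₂^m. Then the probability that the affine span of {x_1, ..., x_n} over 𝔽₂ is not all of 𝔽₂^m is at most 2^{m+1−n}. In particular, if n > 2m this probability is at most 2^{1−n/2}. -/
open Finset

open Matrix in
lemma zmod2_ne_zero : ∀ z : ZMod 2, z ≠ 0 → z = 1 := by decide

open Matrix in
lemma single_cancel {m : ℕ} (j : Fin m) (v : Fin m → ZMod 2) :
    v + Pi.single j 1 + Pi.single j 1 = v := by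
  ext i
  simp only [Pi.add_apply, Pi.single_apply, add_assoc]
  have : ((if i = j then (1:ZMod 2) else 0) + if i = j then 1 else 0) = 0 := by
    split <;> decide
  rw [this, add_zero]

open Matrix in
lemma fiber_double (m : ℕ) (a : Fin m → ZMod 2) (ha : a ≠ 0) (c : ZMod 2) :
    2 * (Finset.univ.filter (fun v : Fin m → ZMod 2 => a ⬝ᵥ v = c)).card = 2 ^ m := by
  obtain ⟨j, hj⟩ : ∃ j, a j ≠ 0 := by
    by_contra h; push_neg at h; exact ha (funext fun j => h j)
  have haj : a j = 1 := zmod2_ne_zero _ hj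
  have hsingle : a ⬝ᵥ Pi.single j 1 = 1 := by
    rw [dotProduct_single, haj, mul_one]
  have key : ∀ c : ZMod 2,
      (Finset.univ.filter (fun v : Fin m → ZMod 2 => a ⬝ᵥ v = c)).card =
      (Finset.univ.filter (fun v : Fin m → ZMod 2 => a ⬝ᵥ v = c + 1)).card := by
    intro c
    apply Finset.card_nbij' (fun v => v + Pi.single j 1) (fun v => v + Pi.single j 1)
    · intro v hv
      simp only [mem_coe, mem_filter, mem_univ, true_and] at hv ⊢
      rw [dotProduct_add, hv, hsingle]
    · intro v hv
      simp only [mem_coe, mem_filter, mem_univ, true_and] at hv ⊢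
      rw [dotProduct_add, hv, hsingle, add_assoc]
      have h11 : (1:ZMod 2) + 1 = 0 := by decide
      rw [h11, add_zero]
    · intro v _; exact single_cancel j v
    · intro v _; exact single_cancel j v
  have h1 : (Finset.univ.filter (fun v : Fin m → ZMod 2 => a ⬝ᵥ v = c + 1)) =
      (Finset.univ.filter (fun v : Fin m → ZMod 2 => ¬ a ⬝ᵥ v = c)) := by
    ext v
    simp only [mem_filter, mem_univ, true_and]
    constructor
    · intro h; rw [h]; intro hc
      exact one_ne_zero (add_eq_left.mp hc)
    · intro h
      have h2 : a ⬝ᵥ v - c ≠ 0 := sub_ne_zero_of_ne h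
      have := zmod2_ne_zero _ h2
      have : a ⬝ᵥ v = c + 1 := by
        have := congrArg (· + c) this
        simpa [sub_add_cancel, add_comm] using this
      exact this
  have hsum : (Finset.univ.filter (fun v : Fin m → ZMod 2 => a ⬝ᵥ v = c)).card +
      (Finset.univ.filter (fun v : Fin m → ZMod 2 => a ⬝ᵥ v = c + 1)).card = 2 ^ m := by
    rw [h1, Finset.card_filter_add_card_filter_not, Finset.card_univ]
    simp
  rw [two_mul]
  rw [key c] at hsum ⊢
  omega

lemma pi_count {V : Type*} [Fintype V] [DecidableEq V] (n : ℕ) (s : Finset V) :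
    (Finset.univ.filter (fun x : Fin n → V => ∀ i, x i ∈ s)).card = s.card ^ n := by
  have : (Finset.univ.filter (fun x : Fin n → V => ∀ i, x i ∈ s)) =
      Fintype.piFinset (fun _ : Fin n => s) := by
    ext x
    simp [Fintype.mem_piFinset]
  rw [this, Fintype.card_piFinset]
  simp

open Matrix in
lemma exists_hyperplane {m n : ℕ} (hn : 1 ≤ n) (x : Fin n → (Fin m → ZMod 2))
    (h : affineSpan (ZMod 2) (Set.range x) ≠ ⊤) :
    ∃ a : Fin m → ZMod 2, a ≠ 0 ∧ ∃ c : ZMod 2, ∀ i, a ⬝ᵥ x i = c := by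
  have hne : (Set.range x).Nonempty := ⟨x ⟨0, hn⟩, Set.mem_range_self _⟩
  have hvs : vectorSpan (ZMod 2) (Set.range x) ≠ ⊤ := by
    intro ht
    exact h ((AffineSubspace.affineSpan_eq_top_iff_vectorSpan_eq_top_of_nonempty
      (ZMod 2) _ _ hne).mpr ht)
  obtain ⟨f, hf0, hfmap⟩ := Submodule.exists_dual_map_eq_bot_of_lt_top hvs.lt_top inferInstance
  have hker : vectorSpan (ZMod 2) (Set.range x) ≤ LinearMap.ker f :=
    Submodule.map_le_iff_le_comap.mp hfmap.le
  set a : Fin m → ZMod 2 := fun i => f (fun j => if i = j then 1 else 0) with ha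
  have hfa : ∀ v, f v = a ⬝ᵥ v := by
    intro v
    rw [LinearMap.pi_apply_eq_sum_univ f v]
    simp only [dotProduct, ha]
    exact Finset.sum_congr rfl (fun i _ => by rw [smul_eq_mul, mul_comm])
  refine ⟨a, ?_, f (x ⟨0, hn⟩), ?_⟩
  · intro ha0
    exact hf0 (LinearMap.ext fun v => by rw [hfa v, ha0, zero_dotProduct, LinearMap.zero_apply])
  · intro i
    rw [← hfa]
    have hmem : x i -ᵥ x ⟨0, hn⟩ ∈ vectorSpan (ZMod 2) (Set.range x) :=
      vsub_mem_vectorSpan _ (Set.mem_range_self _) (Set.mem_range_self _)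
    have := hker hmem
    rw [LinearMap.mem_ker] at this
    have : f (x i) - f (x ⟨0, hn⟩) = 0 := by
      rw [← map_sub]; exact this
    exact sub_eq_zero.mp this

open Matrix in
open scoped Classical in
lemma card_bound (m n : ℕ) (hm : 1 ≤ m) (hn : 1 ≤ n) :
    (Finset.univ.filter
        (fun x : Fin n → (Fin m → ZMod 2) =>
          affineSpan (ZMod 2) (Set.range x) ≠ ⊤)).card ≤ 2 ^ (m + 1) * 2 ^ ((m - 1) * n) := by
  set I : Finset ((Fin m → ZMod 2) × ZMod 2) :=
    (Finset.univ.filter (fun a : Fin m → ZMod 2 => a ≠ 0)) ×ˢ Finset.univ with hI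
  have hsub : (Finset.univ.filter
      (fun x : Fin n → (Fin m → ZMod 2) => affineSpan (ZMod 2) (Set.range x) ≠ ⊤)) ⊆
      I.biUnion (fun p =>
        Finset.univ.filter (fun x : Fin n → (Fin m → ZMod 2) => ∀ i, p.1 ⬝ᵥ x i = p.2)) := by
    intro x hx
    rw [Finset.mem_filter] at hx
    obtain ⟨a, ha, c, hc⟩ := exists_hyperplane hn x hx.2
    refine Finset.mem_biUnion.mpr ⟨(a, c), ?_, ?_⟩
    · simp [hI, ha]
    · simp [hc]
  refine (Finset.card_le_card hsub).trans (Finset.card_biUnion_le.trans ?_)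
  have hterm : ∀ p ∈ I,
      (Finset.univ.filter
        (fun x : Fin n → (Fin m → ZMod 2) => ∀ i, p.1 ⬝ᵥ x i = p.2)).card = 2 ^ ((m - 1) * n) := by
    intro p hp
    have hp1 : p.1 ≠ 0 := by
      simp only [hI, Finset.mem_product, Finset.mem_filter] at hp
      exact hp.1.2
    have hd := fiber_double m p.1 hp1 p.2
    have h2 : 2 ^ m = 2 * 2 ^ (m - 1) := by
      conv_lhs => rw [← Nat.succ_pred_eq_of_pos hm]
      rw [pow_succ, mul_comm, Nat.pred_eq_sub_one]
    have hF : (Finset.univ.filter (fun v : Fin m → ZMod 2 => p.1 ⬝ᵥ v = p.2)).card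
        = 2 ^ (m - 1) := by omega
    have heq : (Finset.univ.filter
        (fun x : Fin n → (Fin m → ZMod 2) => ∀ i, p.1 ⬝ᵥ x i = p.2))
        = (Finset.univ.filter (fun x : Fin n → (Fin m → ZMod 2) =>
            ∀ i, x i ∈ Finset.univ.filter (fun v => p.1 ⬝ᵥ v = p.2))) := by
      simp
    rw [heq, pi_count, hF, ← pow_mul]
  calc ∑ p ∈ I, (Finset.univ.filter
        (fun x : Fin n → (Fin m → ZMod 2) => ∀ i, p.1 ⬝ᵥ x i = p.2)).card
      = I.card * 2 ^ ((m - 1) * n) := by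
        rw [Finset.sum_congr rfl hterm, Finset.sum_const, smul_eq_mul]
    _ ≤ 2 ^ (m + 1) * 2 ^ ((m - 1) * n) := by
        apply Nat.mul_le_mul_right
        have : I.card = (Finset.univ.filter (fun a : Fin m → ZMod 2 => a ≠ 0)).card * 2 := by
          rw [hI, Finset.card_product, Finset.card_univ]
          rfl
        rw [this, pow_succ]
        apply Nat.mul_le_mul_right
        calc (Finset.univ.filter (fun a : Fin m → ZMod 2 => a ≠ 0)).card
            ≤ (Finset.univ : Finset (Fin m → ZMod 2)).card := Finset.card_filter_le _ _
          _ = 2 ^ m := by simp [Finset.card_univ]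

open scoped Classical in
/-- With `n` independent uniform samples in `𝔽₂^m`, the probability that their
affine span is not all of `𝔽₂^m` is at most `2^{m+1-n}`; in particular, for
`n > 2m` it is at most `2^{1-n/2}`. -/
theorem stmt_11 (m n : ℕ) (hm : 1 ≤ m) (hn : 1 ≤ n) :
    ((Finset.univ.filter
        (fun x : Fin n → (Fin m → ZMod 2) =>
          affineSpan (ZMod 2) (Set.range x) ≠ ⊤)).card : ℝ) / 2 ^ (m * n) ≤
      (2 : ℝ) ^ ((m : ℤ) + 1 - n) ∧
    (2 * m < n →
      ((Finset.univ.filter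
          (fun x : Fin n → (Fin m → ZMod 2) =>
            affineSpan (ZMod 2) (Set.range x) ≠ ⊤)).card : ℝ) / 2 ^ (m * n) ≤
        (2 : ℝ) ^ ((1 : ℝ) - (n : ℝ) / 2)) := by
  have hnat := card_bound m n hm hn
  have hpos : (0:ℝ) < 2 ^ (m * n) := by positivity
  have hfirst : ((Finset.univ.filter
        (fun x : Fin n → (Fin m → ZMod 2) =>
          affineSpan (ZMod 2) (Set.range x) ≠ ⊤)).card : ℝ) / 2 ^ (m * n) ≤
      (2 : ℝ) ^ ((m : ℤ) + 1 - n) := by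
    rw [div_le_iff₀ hpos]
    calc ((Finset.univ.filter
        (fun x : Fin n → (Fin m → ZMod 2) =>
          affineSpan (ZMod 2) (Set.range x) ≠ ⊤)).card : ℝ)
        ≤ ((2 ^ (m + 1) * 2 ^ ((m - 1) * n) : ℕ) : ℝ) := by exact_mod_cast hnat
      _ = (2 : ℝ) ^ ((m : ℤ) + 1 - n) * 2 ^ (m * n) := by
          push_cast
          rw [← zpow_natCast (2:ℝ) (m+1), ← zpow_natCast (2:ℝ) ((m-1)*n),
            ← zpow_natCast (2:ℝ) (m*n), ← zpow_add₀ (two_ne_zero), ← zpow_add₀ (two_ne_zero)]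
          congr 1
          push_cast [Nat.cast_sub hm]
          ring
  refine ⟨hfirst, fun h2m => hfirst.trans ?_⟩
  rw [← Real.rpow_intCast 2 ((m : ℤ) + 1 - n)]
  apply Real.rpow_le_rpow_of_exponent_le one_le_two
  have : (2 * m : ℝ) < n := by exact_mod_cast h2m
  push_cast
  linarith
end

section
/- Let 𝒞 ⊆ 𝔽₂^m be an 𝔽₂-linear subspace with |𝒞| = 2^k for some k ≥ 1, such that every nonzero element of 𝒞 has Hamming weight at least d, where 1 ≤ d ≤ m. Let C* be uniform on 𝒞, let i_1, i_2, ... be independent uniform random indices in {1, ..., m} independent of C*, and for each n ≥ 0 let E_n = { C ∈ 𝒞 : C_{i_j} = C*_{i_j} for all 1 ≤ j ≤ n } be the set of codewords consistent with the first n observations. Then there exists an integer n with k − 1 ≤ n ≤ 2mk/d such that Pr(|E_n| = 2) ≥ d/(4mk); moreover, whenever |E_n| = 2, the two codewords in E_n differ in at least d coordinates, i.e., on at least a d/m fraction of {1, ..., m}. -/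
open Finset

lemma zmod2_iff : ∀ a b : ZMod 2, (a + b = 0 ↔ a = b) := by decide
lemma zmod2_nz : ∀ a b : ZMod 2, a ≠ 0 → b ≠ 0 → a + b = 0 := by decide

lemma zmod2_funadd {m : ℕ} (x : Fin m → ZMod 2) : x + x = 0 := by
  funext i; exact (zmod2_iff _ _).2 rfl

variable {m : ℕ}

/-- codewords vanishing on the first `n` observed coordinates -/
def Wset (C : Finset (Fin m → ZMod 2)) (N n : ℕ) (ι : Fin N → Fin m) :
    Finset (Fin m → ZMod 2) :=
  C.filter (fun c => ∀ j : Fin N, (j : ℕ) < n → c (ι j) = 0)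

section core
variable {C : Finset (Fin m → ZMod 2)}

lemma Wzero (hzero : (0 : Fin m → ZMod 2) ∈ C) {N n : ℕ} (ι : Fin N → Fin m) :
    (0 : Fin m → ZMod 2) ∈ Wset C N n ι := by
  simp [Wset, hzero]

lemma Wcard_pos (hzero : (0 : Fin m → ZMod 2) ∈ C) {N n : ℕ} (ι : Fin N → Fin m) :
    1 ≤ (Wset C N n ι).card :=
  card_pos.2 ⟨0, Wzero hzero ι⟩

lemma Wadd (hadd : ∀ x ∈ C, ∀ y ∈ C, x + y ∈ C) {N n : ℕ} {ι : Fin N → Fin m}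
    {x y : Fin m → ZMod 2}
    (hx : x ∈ Wset C N n ι) (hy : y ∈ Wset C N n ι) : x + y ∈ Wset C N n ι := by
  simp only [Wset, mem_filter] at *
  refine ⟨hadd _ hx.1 _ hy.1, fun j hj => ?_⟩
  simp [Pi.add_apply, hx.2 j hj, hy.2 j hj]

lemma Wsucc {N n : ℕ} (hn : n < N) (ι : Fin N → Fin m) :
    Wset C N (n + 1) ι = (Wset C N n ι).filter (fun c => c (ι ⟨n, hn⟩) = 0) := by
  ext c
  simp only [Wset, mem_filter, and_assoc]
  constructor
  · intro ⟨h1, h2⟩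
    exact ⟨h1, fun j hj => h2 j (Nat.lt_succ_of_lt hj), h2 ⟨n, hn⟩ (Nat.lt_succ_self n)⟩
  · intro ⟨h1, h2, h3⟩
    refine ⟨h1, fun j hj => ?_⟩
    rcases Nat.lt_succ_iff_lt_or_eq.mp hj with h | h
    · exact h2 j h
    · have : j = ⟨n, hn⟩ := Fin.ext h
      rw [this]; exact h3

lemma Wmono {N n : ℕ} (hn : n < N) (ι : Fin N → Fin m) :
    Wset C N (n + 1) ι ⊆ Wset C N n ι := by
  rw [Wsucc hn]; exact filter_subset _ _

/-- if some codeword in `Wset n` is nonzero at the `n`-th observed coordinate,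
the consistent set halves -/
lemma Whalve (hadd : ∀ x ∈ C, ∀ y ∈ C, x + y ∈ C) {N n : ℕ} (hn : n < N)
    (ι : Fin N → Fin m) {c₀ : Fin m → ZMod 2}
    (hc₀ : c₀ ∈ Wset C N n ι) (hc₀n : c₀ (ι ⟨n, hn⟩) ≠ 0) :
    2 * (Wset C N (n+1) ι).card = (Wset C N n ι).card := by
  have hsplit : (Wset C N n ι).card
      = (Wset C N (n+1) ι).card + ((Wset C N n ι).filter (fun c => ¬ c (ι ⟨n, hn⟩) = 0)).card := by
    rw [Wsucc hn, Finset.card_filter_add_card_filter_not]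
  have hbij : (Wset C N (n+1) ι).card
      = ((Wset C N n ι).filter (fun c => ¬ c (ι ⟨n, hn⟩) = 0)).card := by
    refine Finset.card_nbij' (fun c => c + c₀) (fun c => c + c₀) ?_ ?_ ?_ ?_
    · intro c hc
      rw [Wsucc hn] at hc
      obtain ⟨hc1, hc2⟩ := mem_filter.mp hc
      refine mem_filter.mpr ⟨Wadd hadd hc1 hc₀, ?_⟩
      simp only [Pi.add_apply, hc2, zero_add]
      exact hc₀n
    · intro c hc
      obtain ⟨hc1, hc2⟩ := mem_filter.mp hc
      rw [Wsucc hn]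
      refine mem_filter.mpr ⟨Wadd hadd hc1 hc₀, ?_⟩
      simp only [Pi.add_apply]
      exact zmod2_nz _ _ hc2 hc₀n
    · intro c _; simp [add_assoc, zmod2_funadd]
    · intro c _; simp [add_assoc, zmod2_funadd]
  rw [hsplit, ← hbij, two_mul]

/-- dichotomy: stay or halve -/
lemma Wdichotomy (hadd : ∀ x ∈ C, ∀ y ∈ C, x + y ∈ C) {N n : ℕ} (hn : n < N)
    (ι : Fin N → Fin m) :
    Wset C N (n+1) ι = Wset C N n ι ∨
    2 * (Wset C N (n+1) ι).card = (Wset C N n ι).card := by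
  by_cases hH : ∃ c ∈ Wset C N n ι, c (ι ⟨n, hn⟩) ≠ 0
  · obtain ⟨c₀, hc₀, hc₀n⟩ := hH
    exact Or.inr (Whalve hadd hn ι hc₀ hc₀n)
  · left
    push_neg at hH
    rw [Wsucc hn]
    exact filter_true_of_mem hH

lemma Wdecreasing (hadd : ∀ x ∈ C, ∀ y ∈ C, x + y ∈ C) {N : ℕ} (ι : Fin N → Fin m)
    {n n' : ℕ} (h : n ≤ n') (h' : n' ≤ N) :
    Wset C N n' ι ⊆ Wset C N n ι := by
  induction n' with
  | zero => simp_all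
  | succ p ih =>
    rcases Nat.lt_or_ge p n with hpn | hpn
    · have : n = p + 1 := by omega
      subst this; rfl
    · exact (Wmono (by omega) ι).trans (ih (by omega) (by omega))

end core

lemma filter_range_succ_card (P : ℕ → Prop) [DecidablePred P] (p : ℕ) :
    ((range (p+1)).filter P).card = ((range p).filter P).card + (if P p then 1 else 0) := by
  rw [range_add_one, filter_insert]
  by_cases h : P p
  · rw [if_pos h, if_pos h, card_insert_of_notMem (by simp)]
  · rw [if_neg h, if_neg h, add_zero]

section seq
variable {f : ℕ → ℕ} {N k : ℕ}

lemma seq_mono (hdich : ∀ n < N, f (n+1) = f n ∨ 2 * f (n+1) = f n)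
    (hpos : ∀ n, 1 ≤ f n) {n : ℕ} (hn : n < N) : f (n+1) ≤ f n := by
  rcases hdich n hn with h | h
  · omega
  · have := hpos (n+1); omega

lemma seq_mono' (hdich : ∀ n < N, f (n+1) = f n ∨ 2 * f (n+1) = f n)
    (hpos : ∀ n, 1 ≤ f n) {a b : ℕ} (hab : a ≤ b) (hb : b ≤ N) : f b ≤ f a := by
  induction b with
  | zero => have : a = 0 := Nat.le_zero.mp hab; simp [this]
  | succ p ih =>
    rcases Nat.lt_or_ge p a with h | h
    · have h' : a = p + 1 := by omega
      rw [h']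
    · exact (seq_mono hdich hpos (by omega)).trans (ih h (by omega))

/-- at most `k - 1` halvings can start from a state of size `≥ 3` -/
lemma seq_budget (hdich : ∀ n < N, f (n+1) = f n ∨ 2 * f (n+1) = f n)
    (hpos : ∀ n, 1 ≤ f n) (hf0 : f 0 = 2 ^ k) (hk : 1 ≤ k) :
    ((range N).filter (fun j => 3 ≤ f j ∧ f (j+1) < f j)).card ≤ k - 1 := by
  have key : ∀ n ≤ N,
      (3 ≤ f n → f n * 2 ^ ((range n).filter (fun j => 3 ≤ f j ∧ f (j+1) < f j)).card ≤ 2 ^ k)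
      ∧ ((range n).filter (fun j => 3 ≤ f j ∧ f (j+1) < f j)).card ≤ k - 1 := by
    intro n hn
    induction n with
    | zero => simp [hf0]
    | succ p ih =>
      obtain ⟨ih1, ih2⟩ := ih (by omega)
      have hstep := filter_range_succ_card (fun j => 3 ≤ f j ∧ f (j+1) < f j) p
      by_cases hp : 3 ≤ f p ∧ f (p+1) < f p
      · obtain ⟨hp3, hplt⟩ := hp
        have hhalve : 2 * f (p+1) = f p := by
          rcases hdich p (by omega) with h | h
          · omega
          · exact h
        have h1 := ih1 hp3
        have e1 : f (p+1) * 2 ^ (((range p).filter (fun j => 3 ≤ f j ∧ f (j+1) < f j)).card + 1)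
            = f p * 2 ^ ((range p).filter (fun j => 3 ≤ f j ∧ f (j+1) < f j)).card := by
          rw [pow_succ, ← hhalve]; ring
        constructor
        · intro _
          rw [hstep, if_pos ⟨hp3, hplt⟩, e1]
          exact h1
        · have hf2 : 2 ≤ f (p+1) := by omega
          have hh : 2 * 2 ^ (((range p).filter (fun j => 3 ≤ f j ∧ f (j+1) < f j)).card + 1)
              ≤ 2 ^ k := by
            calc 2 * 2 ^ (((range p).filter (fun j => 3 ≤ f j ∧ f (j+1) < f j)).card + 1)
                ≤ f (p+1) * 2 ^ (((range p).filter (fun j => 3 ≤ f j ∧ f (j+1) < f j)).card + 1) :=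
                  Nat.mul_le_mul_right _ hf2
              _ = f p * 2 ^ ((range p).filter (fun j => 3 ≤ f j ∧ f (j+1) < f j)).card := e1
              _ ≤ 2 ^ k := h1
          have h2 : 2 ^ ((((range p).filter (fun j => 3 ≤ f j ∧ f (j+1) < f j)).card + 1) + 1)
              ≤ 2 ^ k := by
            rw [pow_succ]; omega
          have h3 := (Nat.pow_le_pow_iff_right (le_refl 2)).mp h2
          rw [hstep, if_pos ⟨hp3, hplt⟩]
          omega
      · have hsame := hstep.trans (by rw [if_neg hp, add_zero])
        by_cases h3 : 3 ≤ f p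
        · have heq : f (p+1) = f p := by
            rcases hdich p (by omega) with h | h
            · exact h
            · have := hpos (p+1)
              exact absurd ⟨h3, by omega⟩ hp
          rw [hsame, heq]
          exact ⟨ih1, ih2⟩
        · have hle : f (p+1) ≤ f p := seq_mono hdich hpos (by omega)
          rw [hsame]
          exact ⟨fun hc => by omega, ih2⟩
  exact (key N le_rfl).2

/-- exact halving count: `f n * 2 ^ (#halvings before n) = 2 ^ k` -/
lemma seq_ghit (hdich : ∀ n < N, f (n+1) = f n ∨ 2 * f (n+1) = f n)
    (hpos : ∀ n, 1 ≤ f n) (hf0 : f 0 = 2 ^ k) :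
    ∀ n ≤ N, f n * 2 ^ ((range n).filter (fun j => f (j+1) < f j)).card = 2 ^ k := by
  intro n hn
  induction n with
  | zero => simpa using hf0
  | succ p ih =>
    have ihp := ih (by omega)
    have hstep := filter_range_succ_card (fun j => f (j+1) < f j) p
    by_cases hp : f (p+1) < f p
    · have hhalve : 2 * f (p+1) = f p := by
        rcases hdich p (by omega) with h | h
        · omega
        · exact h
      rw [hstep, if_pos hp, ← ihp, pow_succ, ← hhalve]
      ring
    · have heq : f (p+1) = f p := by
        rcases hdich p (by omega) with h | h
        · exact h
        · have := hpos (p+1); omega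
      rw [hstep, if_neg hp, add_zero, heq, ihp]

/-- first hitting time of state `2` -/
lemma seq_firsthit (hdich : ∀ n < N, f (n+1) = f n ∨ 2 * f (n+1) = f n)
    (hpos : ∀ n, 1 ≤ f n) (hf0 : f 0 = 2 ^ k) (hk : 2 ≤ k) (hN : f N ≤ 2) :
    ∃ n, k - 1 ≤ n ∧ n ≤ N ∧ f n = 2 ∧ ∀ j < n, 3 ≤ f j := by
  have hex : ∃ n, f n ≤ 2 ∧ n ≤ N := ⟨N, hN, le_rfl⟩
  classical
  obtain ⟨n₀, ⟨hfn₀, hn₀N⟩, hmin'⟩ :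
      ∃ n, (f n ≤ 2 ∧ n ≤ N) ∧ ∀ j < n, ¬(f j ≤ 2 ∧ j ≤ N) :=
    ⟨Nat.find hex, Nat.find_spec hex, fun j hj => Nat.find_min hex hj⟩
  have hmin : ∀ j < n₀, 3 ≤ f j := by
    intro j hj
    have h := hmin' j hj
    omega
  have hpos0 : n₀ ≠ 0 := by
    intro h
    subst h
    have : (4:ℕ) ≤ 2 ^ k := by
      calc (4:ℕ) = 2^2 := rfl
        _ ≤ 2^k := Nat.pow_le_pow_right (by omega) hk
    omega
  obtain ⟨p, rfl⟩ : ∃ p, n₀ = p + 1 := ⟨n₀ - 1, by omega⟩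
  have hp3 : 3 ≤ f p := hmin p (by omega)
  have hf2 : f (p+1) = 2 := by
    rcases hdich p (by omega) with h | h
    · omega
    · have := hpos (p+1); omega
  refine ⟨p+1, ?_, hn₀N, hf2, hmin⟩
  have hg := seq_ghit hdich hpos hf0 (p+1) hn₀N
  rw [hf2] at hg
  have h2 : 2 ^ (((range (p+1)).filter (fun j => f (j+1) < f j)).card + 1) = 2 ^ k := by
    rw [pow_succ]; omega
  have h4 := Nat.pow_right_injective (le_refl 2) h2
  have hcard : ((range (p+1)).filter (fun j => f (j+1) < f j)).card ≤ p + 1 :=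
    (card_filter_le _ _).trans (by simp)
  omega

end seq

section counting
variable {m : ℕ} {C : Finset (Fin m → ZMod 2)}

/-- `Wset` only depends on the first `n` coordinates of `ι` -/
lemma Wset_congr {N n : ℕ} {ι ι' : Fin N → Fin m}
    (h : ∀ j : Fin N, (j : ℕ) < n → ι j = ι' j) : Wset C N n ι = Wset C N n ι' := by
  unfold Wset
  apply filter_congr
  intro c _
  constructor
  · intro hc j hj; rw [← h j hj]; exact hc j hj
  · intro hc j hj; rw [h j hj]; exact hc j hj

/-- key conditional-probability counting: if the consistent set is still large,
a fresh uniform coordinate halves it with probability at least `d/m` -/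
lemma step_counting (d : ℕ)
    (hzero : (0 : Fin m → ZMod 2) ∈ C)
    (hadd : ∀ x ∈ C, ∀ y ∈ C, x + y ∈ C)
    (hweight : ∀ c ∈ C, c ≠ 0 → d ≤ (univ.filter (fun i : Fin m => c i ≠ 0)).card)
    {N n : ℕ} (hn : n < N) :
    d * (univ.filter (fun ι : Fin N → Fin m => 3 ≤ (Wset C N n ι).card)).card ≤
    m * (univ.filter (fun ι : Fin N → Fin m => 3 ≤ (Wset C N n ι).card ∧
        (Wset C N (n+1) ι).card < (Wset C N n ι).card)).card := by
  classical
  set A := univ.filter (fun ι : Fin N → Fin m => 3 ≤ (Wset C N n ι).card) with hA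
  set B := univ.filter (fun ι : Fin N → Fin m => 3 ≤ (Wset C N n ι).card ∧
      (Wset C N (n+1) ι).card < (Wset C N n ι).card) with hB
  set T : Finset ((Fin N → Fin m) × Fin m) :=
    (A ×ˢ univ).filter (fun x => Function.update x.1 ⟨n, hn⟩ x.2 ∈ B) with hT
  -- Step 1 : d * A.card ≤ T.card
  have step1 : d * A.card ≤ T.card := by
    have hfib : T.card = ∑ ι ∈ A, (T.filter (fun x => x.1 = ι)).card := by
      apply card_eq_sum_card_fiberwise (f := Prod.fst)
      intro x hx
      exact (mem_product.mp (mem_filter.mp hx).1).1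
    rw [hfib]
    calc d * A.card = ∑ _ι ∈ A, d := by rw [sum_const, smul_eq_mul, mul_comm]
      _ ≤ ∑ ι ∈ A, (T.filter (fun x => x.1 = ι)).card := by
        apply sum_le_sum
        intro ι hι
        -- pick a nonzero codeword in `Wset n ι`
        have h3 : 3 ≤ (Wset C N n ι).card := (mem_filter.mp hι).2
        obtain ⟨c₀, hc₀W, hc₀ne⟩ :=
          Finset.exists_mem_ne
            (show 1 < (Wset C N n ι).card by omega) (0 : Fin m → ZMod 2)
        have hc₀C : c₀ ∈ C := (mem_filter.mp hc₀W).1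
        have hd := hweight c₀ hc₀C hc₀ne
        -- inject the coordinates where c₀ ≠ 0 into the fiber
        refine le_trans hd ?_
        apply Finset.card_le_card_of_injOn (fun v => (ι, v))
        · intro v hv
          have hvne : c₀ v ≠ 0 := (mem_filter.mp hv).2
          set ι' := Function.update ι ⟨n, hn⟩ v with hι'
          have hWeq : Wset C N n ι' = Wset C N n ι := by
            apply Wset_congr
            intro j hj
            apply Function.update_of_ne
            intro hje
            rw [hje] at hj
            simp at hj
          have hc₀W' : c₀ ∈ Wset C N n ι' := hWeq ▸ hc₀W
          have hv' : c₀ (ι' ⟨n, hn⟩) ≠ 0 := by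
            rw [hι', Function.update_self]
            exact hvne
          have hhalve := Whalve hadd hn ι' hc₀W' hv'
          have hpos := Wcard_pos (C := C) hzero (N := N) (n := n+1) ι'
          refine mem_filter.mpr ⟨mem_filter.mpr ⟨mem_product.mpr ⟨hι, mem_univ v⟩, ?_⟩, rfl⟩
          refine mem_filter.mpr ⟨mem_univ _, ?_, ?_⟩
          · rw [hWeq]; exact h3
          · show (Wset C N (n+1) ι').card < (Wset C N n ι').card
            rw [hWeq] at hhalve ⊢
            omega
        · intro a _ b _ hab
          exact (Prod.mk.injEq _ _ _ _).mp hab |>.2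
  -- Step 2 : T.card ≤ B.card * m
  have step2 : T.card ≤ B.card * m := by
    have : T.card ≤ (B ×ˢ (univ : Finset (Fin m))).card := by
      apply Finset.card_le_card_of_injOn
        (fun x => (Function.update x.1 ⟨n, hn⟩ x.2, x.1 ⟨n, hn⟩))
      · intro x hx
        obtain ⟨hx1, hx2⟩ := mem_filter.mp hx
        exact mem_product.mpr ⟨hx2, mem_univ _⟩
      · intro a _ b _ hab
        simp only [Prod.mk.injEq] at hab
        obtain ⟨h1, h2⟩ := hab
        have ha : a.1 = b.1 := by
          have h3 := congrArg (fun g => Function.update g (⟨n, hn⟩ : Fin N) (a.1 ⟨n, hn⟩)) h1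
          simp only [Function.update_idem] at h3
          rwa [Function.update_eq_self, h2, Function.update_eq_self] at h3
        have hv : a.2 = b.2 := by
          have := congrArg (fun g => g (⟨n, hn⟩ : Fin N)) h1
          simpa [Function.update_self] using this
        exact Prod.ext ha hv
    simpa [card_product] using this
  calc d * A.card ≤ T.card := step1
    _ ≤ B.card * m := step2
    _ = m * B.card := mul_comm _ _

end counting

section helpers
variable {α β : Type*} [Fintype α] [Fintype β]

lemma filter_snd_card (q : β → Prop) [DecidablePred q] :
    (univ.filter fun x : α × β => q x.2).card = Fintype.card α * (univ.filter q).card := by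
  have h : (univ.filter fun x : α × β => q x.2) = (univ : Finset α) ×ˢ (univ.filter q) := by
    ext x; simp
  rw [h, card_product, card_univ]

lemma filter_fst_card (p : α → Prop) [DecidablePred p] :
    (univ.filter fun x : α × β => p x.1).card = (univ.filter p).card * Fintype.card β := by
  have h : (univ.filter fun x : α × β => p x.1) = (univ.filter p) ×ˢ (univ : Finset β) := by
    ext x; simp
  rw [h, card_product, card_univ]

lemma filter_equiv_card (e : α ≃ β) (p : β → Prop) [DecidablePred p] :
    (univ.filter fun a => p (e a)).card = (univ.filter p).card := by
  apply Finset.card_nbij' (fun a => e a) (fun b => e.symm b)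
  · intro a ha; simpa using (mem_filter.mp ha).2
  · intro b hb; simpa using (mem_filter.mp hb).2
  · intro a _; simp
  · intro b _; simp

end helpers

section agg
variable {m : ℕ} {C : Finset (Fin m → ZMod 2)}

lemma W0 {N : ℕ} (ι : Fin N → Fin m) : Wset C N 0 ι = C := by
  unfold Wset
  apply filter_true_of_mem
  intro c _ j hj
  omega

lemma Wdich_card (hadd : ∀ x ∈ C, ∀ y ∈ C, x + y ∈ C) {N : ℕ} (ι : Fin N → Fin m) :
    ∀ n < N, (Wset C N (n+1) ι).card = (Wset C N n ι).card ∨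
      2 * (Wset C N (n+1) ι).card = (Wset C N n ι).card := by
  intro n hn
  rcases Wdichotomy hadd hn ι with h | h
  · exact Or.inl (congrArg Finset.card h)
  · exact Or.inr h

lemma budget_agg {k : ℕ} (hzero : (0 : Fin m → ZMod 2) ∈ C)
    (hadd : ∀ x ∈ C, ∀ y ∈ C, x + y ∈ C)
    (hcard : C.card = 2 ^ k) (hk : 1 ≤ k) (N : ℕ) :
    ∑ n ∈ range N, (univ.filter (fun ι : Fin N → Fin m =>
        3 ≤ (Wset C N n ι).card ∧ (Wset C N (n+1) ι).card < (Wset C N n ι).card)).card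
      ≤ (k - 1) * m ^ N := by
  classical
  have hswap : ∑ n ∈ range N, (univ.filter (fun ι : Fin N → Fin m =>
        3 ≤ (Wset C N n ι).card ∧ (Wset C N (n+1) ι).card < (Wset C N n ι).card)).card
      = ∑ ι : Fin N → Fin m, ((range N).filter (fun n =>
        3 ≤ (Wset C N n ι).card ∧ (Wset C N (n+1) ι).card < (Wset C N n ι).card)).card := by
    simp only [card_filter]
    exact Finset.sum_comm
  rw [hswap]
  calc ∑ ι : Fin N → Fin m, ((range N).filter (fun n =>
        3 ≤ (Wset C N n ι).card ∧ (Wset C N (n+1) ι).card < (Wset C N n ι).card)).card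
      ≤ ∑ _ι : Fin N → Fin m, (k - 1) := by
        apply sum_le_sum
        intro ι _
        exact seq_budget (Wdich_card hadd ι) (fun n => Wcard_pos hzero ι)
          (by rw [W0, hcard]) hk
    _ = (k - 1) * m ^ N := by
        rw [sum_const, smul_eq_mul, card_univ, Fintype.card_fun, Fintype.card_fin,
          Fintype.card_fin, mul_comm]

lemma A_decreasing (hadd : ∀ x ∈ C, ∀ y ∈ C, x + y ∈ C)
    (hzero : (0 : Fin m → ZMod 2) ∈ C) {N n : ℕ} (hn : n ≤ N) :
    (univ.filter (fun ι : Fin N → Fin m => 3 ≤ (Wset C N N ι).card)) ⊆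
    (univ.filter (fun ι : Fin N → Fin m => 3 ≤ (Wset C N n ι).card)) := by
  intro ι hι
  obtain ⟨_, h3⟩ := mem_filter.mp hι
  refine mem_filter.mpr ⟨mem_univ _, le_trans h3 ?_⟩
  exact seq_mono' (f := fun n => (Wset C N n ι).card) (Wdich_card hadd ι) (fun n => Wcard_pos hzero ι) hn le_rfl

/-- translation invariance: the consistent set for `cstar` has the same size as
the vanishing set -/
lemma shift_card (hadd : ∀ x ∈ C, ∀ y ∈ C, x + y ∈ C) {n : ℕ}
    {cstar : Fin m → ZMod 2} (hcs : cstar ∈ C) (ι' : Fin n → Fin m) :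
    (C.filter (fun c => ∀ j : Fin n, c (ι' j) = cstar (ι' j))).card
      = (C.filter (fun c => ∀ j : Fin n, c (ι' j) = 0)).card := by
  apply Finset.card_nbij' (fun c => c + cstar) (fun c => c + cstar)
  · intro c hc
    obtain ⟨hc1, hc2⟩ := mem_filter.mp hc
    refine mem_filter.mpr ⟨hadd _ hc1 _ hcs, fun j => ?_⟩
    beta_reduce
    rw [Pi.add_apply, hc2 j]
    exact (zmod2_iff _ _).2 rfl
  · intro c hc
    obtain ⟨hc1, hc2⟩ := mem_filter.mp hc
    refine mem_filter.mpr ⟨hadd _ hc1 _ hcs, fun j => ?_⟩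
    beta_reduce
    rw [Pi.add_apply, hc2 j, zero_add]
  · intro c _; simp [add_assoc, zmod2_funadd]
  · intro c _; simp [add_assoc, zmod2_funadd]

/-- the statement's numerator equals `2^k` times the count over observation
sequences alone -/
lemma numerator_eq {k : ℕ} (hadd : ∀ x ∈ C, ∀ y ∈ C, x + y ∈ C)
    (hcard : C.card = 2 ^ k) (n : ℕ) :
    (univ.filter (fun ci : {x // x ∈ C} × (Fin n → Fin m) =>
        (C.filter (fun c => ∀ j : Fin n,
          c (ci.2 j) = (ci.1 : Fin m → ZMod 2) (ci.2 j))).card = 2)).card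
    = 2 ^ k * (univ.filter (fun ι' : Fin n → Fin m =>
        (C.filter (fun c => ∀ j : Fin n, c (ι' j) = 0)).card = 2)).card := by
  classical
  have hcongr : (univ.filter (fun ci : {x // x ∈ C} × (Fin n → Fin m) =>
        (C.filter (fun c => ∀ j : Fin n,
          c (ci.2 j) = (ci.1 : Fin m → ZMod 2) (ci.2 j))).card = 2))
      = (univ.filter (fun ci : {x // x ∈ C} × (Fin n → Fin m) =>
        (C.filter (fun c => ∀ j : Fin n, c (ci.2 j) = 0)).card = 2)) := by
    apply filter_congr
    intro ci _
    rw [shift_card hadd ci.1.2 ci.2]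
  rw [hcongr]
  have h3 := filter_snd_card (α := {x // x ∈ C})
    (fun ι' : Fin n → Fin m => (C.filter (fun c => ∀ j : Fin n, c (ι' j) = 0)).card = 2)
  rw [Fintype.card_coe, hcard] at h3
  exact h3

/-- transfer from horizon `N` to horizon `n` -/
lemma transfer {N n : ℕ} (hn : n ≤ N) :
    (univ.filter (fun ι : Fin N → Fin m => (Wset C N n ι).card = 2)).card
    = (univ.filter (fun ι' : Fin n → Fin m =>
        (C.filter (fun c => ∀ j : Fin n, c (ι' j) = 0)).card = 2)).card * m ^ (N - n) := by
  classical
  obtain ⟨r, rfl⟩ : ∃ r, N = n + r := ⟨N - n, by omega⟩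
  have hr : n + r - n = r := by omega
  rw [hr]
  set e : (Fin (n + r) → Fin m) ≃ (Fin n → Fin m) × (Fin r → Fin m) :=
    (Equiv.arrowCongr finSumFinEquiv.symm (Equiv.refl _)).trans
      (Equiv.sumArrowEquivProdArrow _ _ _) with he
  have hWeq : ∀ ι : Fin (n + r) → Fin m,
      Wset C (n + r) n ι = C.filter (fun c => ∀ j : Fin n, c ((e ι).1 j) = 0) := by
    intro ι
    unfold Wset
    apply filter_congr
    intro c _
    have happ : ∀ j : Fin n, (e ι).1 j = ι (Fin.castAdd r j) := by
      intro j
      simp [he, Equiv.sumArrowEquivProdArrow, Equiv.arrowCongr]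
    constructor
    · intro hc j
      rw [happ j]
      exact hc (Fin.castAdd r j) (by simpa using j.isLt)
    · intro hc j hj
      have : j = Fin.castAdd r ⟨(j : ℕ), hj⟩ := Fin.ext rfl
      rw [this, ← happ ⟨(j : ℕ), hj⟩]
      exact hc _
  have h1 : (univ.filter (fun ι : Fin (n+r) → Fin m => (Wset C (n+r) n ι).card = 2))
      = (univ.filter (fun ι : Fin (n+r) → Fin m =>
          (C.filter (fun c => ∀ j : Fin n, c ((e ι).1 j) = 0)).card = 2)) := by
    apply filter_congr
    intro ι _
    rw [hWeq ι]
  rw [h1]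
  have h2 := filter_equiv_card e (fun x : (Fin n → Fin m) × (Fin r → Fin m) =>
    (C.filter (fun c => ∀ j : Fin n, c (x.1 j) = 0)).card = 2)
  rw [h2]
  have h4 := filter_fst_card (β := Fin r → Fin m)
    (fun ι' : Fin n → Fin m => (C.filter (fun c => ∀ j : Fin n, c (ι' j) = 0)).card = 2)
  rw [Fintype.card_fun, Fintype.card_fin, Fintype.card_fin] at h4
  exact h4

end agg

/-- the hitting time of state `2`, via `Nat.find` -/
lemma seq_hit {f : ℕ → ℕ} {N k : ℕ} [DecidablePred fun n => f n ≤ 2 ∨ N < n]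
    (H : ∃ n, f n ≤ 2 ∨ N < n)
    (hdich : ∀ n < N, f (n+1) = f n ∨ 2 * f (n+1) = f n)
    (hpos : ∀ n, 1 ≤ f n) (hf0 : f 0 = 2 ^ k) (hk : 2 ≤ k) (hN : f N ≤ 2) :
    k - 1 ≤ Nat.find H ∧ Nat.find H ≤ N ∧ f (Nat.find H) = 2 := by
  obtain ⟨n, h1, h2, h3, h4⟩ := seq_firsthit hdich hpos hf0 hk hN
  have hle : Nat.find H ≤ n := Nat.find_le (Or.inl (by omega))
  have heq : Nat.find H = n := by
    by_contra hne
    have hlt : Nat.find H < n := by omega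
    have hspec := Nat.find_spec H
    have h5 := h4 _ hlt
    rcases hspec with h | h
    · omega
    · omega
  rw [heq]
  exact ⟨h1, h2, h3⟩

lemma final_real (m k d n cnt c' : ℕ) (hm : 1 ≤ m) (hk : 1 ≤ k) (hd : 1 ≤ d)
    (hcnt : cnt = 2 ^ k * c')
    (h : d * m ^ n ≤ 4 * (m * (k * c'))) :
    (d : ℝ) / (4 * m * k) ≤ (cnt : ℝ) / (2 ^ k * m ^ n) := by
  subst hcnt
  rw [div_le_div_iff₀ (by positivity) (by positivity)]
  push_cast
  have h' : (d : ℝ) * m ^ n ≤ 4 * (m * (k * c')) := by exact_mod_cast h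
  calc (d : ℝ) * (2 ^ k * m ^ n) = 2 ^ k * ((d : ℝ) * m ^ n) := by ring
    _ ≤ 2 ^ k * (4 * (m * (k * c'))) := by
        apply mul_le_mul_of_nonneg_left h' (by positivity)
    _ = 2 ^ k * c' * (4 * m * k) := by ring

/-- Lemma 8 (general error-correcting codes). Let `C ⊆ 𝔽₂^m` be a linear code of
dimension `k` and minimum distance `d`. If a uniformly random codeword `C*` is
observed at `n` independent uniform coordinates, then for some
`k - 1 ≤ n ≤ 2mk/d`, with probability at least `d/(4mk)` exactly two codewords
remain consistent with the observations; moreover any two distinct consistent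
codewords differ in at least `d` coordinates (a `d/m` fraction). -/
theorem stmt_14 (m k d : ℕ) (hm : 1 ≤ m) (hk : 1 ≤ k) (hd1 : 1 ≤ d) (hdm : d ≤ m)
    (C : Finset (Fin m → ZMod 2))
    (hzero : (0 : Fin m → ZMod 2) ∈ C)
    (hadd : ∀ x ∈ C, ∀ y ∈ C, x + y ∈ C)
    (hcard : C.card = 2 ^ k)
    (hweight : ∀ c ∈ C, c ≠ 0 →
      d ≤ (Finset.univ.filter (fun i : Fin m => c i ≠ 0)).card) :
    (∃ n : ℕ, k - 1 ≤ n ∧ (n : ℝ) ≤ 2 * m * k / d ∧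
      (d : ℝ) / (4 * m * k) ≤
        ((Finset.univ.filter
            (fun ci : {x // x ∈ C} × (Fin n → Fin m) =>
              (C.filter (fun c => ∀ j : Fin n,
                c (ci.2 j) = (ci.1 : Fin m → ZMod 2) (ci.2 j))).card = 2)).card : ℝ) /
          (2 ^ k * m ^ n)) ∧
    (∀ (n : ℕ) (cstar : Fin m → ZMod 2), cstar ∈ C → ∀ ι : Fin n → Fin m,
      ∀ c₁ ∈ C.filter (fun c => ∀ j : Fin n, c (ι j) = cstar (ι j)),
      ∀ c₂ ∈ C.filter (fun c => ∀ j : Fin n, c (ι j) = cstar (ι j)),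
        c₁ ≠ c₂ →
        d ≤ (Finset.univ.filter (fun i : Fin m => c₁ i ≠ c₂ i)).card) := by
  classical
  constructor
  · -- main probabilistic statement
    by_cases hk1 : k = 1
    · -- k = 1 : take n = 0, all codewords always remain, and |C| = 2
      subst hk1
      refine ⟨0, by omega, by simp only [Nat.cast_zero]; positivity, ?_⟩
      have hfull : (univ.filter
          (fun ci : {x // x ∈ C} × (Fin 0 → Fin m) =>
            (C.filter (fun c => ∀ j : Fin 0,
              c (ci.2 j) = (ci.1 : Fin m → ZMod 2) (ci.2 j))).card = 2))
          = univ := by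
        apply filter_true_of_mem
        intro ci _
        have hC : C.filter (fun c => ∀ j : Fin 0,
            c (ci.2 j) = (ci.1 : Fin m → ZMod 2) (ci.2 j)) = C :=
          filter_true_of_mem (fun c _ j => j.elim0)
        rw [hC, hcard]
        norm_num
      rw [hfull, card_univ]
      apply final_real m 1 d 0 _ 1 hm le_rfl hd1
      · rw [Fintype.card_prod, Fintype.card_coe, hcard]
        simp
      · simpa using hdm.trans (by omega : m ≤ 4 * m)
    · -- k ≥ 2
      have hk2 : 2 ≤ k := by omega
      set N := 2 * m * (k - 1) / d + 1 with hN
      -- arithmetic facts about N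
      have hdiv := Nat.div_add_mod (2 * m * (k - 1)) d
      have hmod := Nat.mod_lt (2 * m * (k - 1)) (show 0 < d by omega)
      have hdN1 : 2 * m * (k - 1) + 1 ≤ d * N := by
        rw [hN, Nat.mul_add, Nat.mul_one]
        omega
      have hdN2 : d * N ≤ 2 * m * (k - 1) + d := by
        rw [hN, Nat.mul_add, Nat.mul_one]
        omega
      have e2 : 2 * m * (k - 1) + 2 * m = 2 * m * k := by
        calc 2 * m * (k - 1) + 2 * m = 2 * m * ((k - 1) + 1) := by ring
          _ = 2 * m * k := by congr 1; omega
      have hdN3 : d * N ≤ 2 * m * k := by omega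
      have hNbig : 2 * (k - 1) < N := by
        have h1 : d * (2 * (k - 1)) ≤ d * N - 1 := by
          have : d * (2 * (k - 1)) ≤ 2 * m * (k - 1) := by
            calc d * (2 * (k - 1)) = 2 * d * (k - 1) := by ring
              _ ≤ 2 * m * (k - 1) := by
                  apply Nat.mul_le_mul_right
                  omega
          omega
        by_contra hc
        push_neg at hc
        have := Nat.mul_le_mul_left d hc
        omega
      have hNk : k ≤ N := by omega
      -- abbreviations
      obtain ⟨AN, hAN⟩ : ∃ x, x = (univ.filter
          (fun ι : Fin N → Fin m => 3 ≤ (Wset C N N ι).card)).card := ⟨_, rfl⟩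
      -- chain : d * N * AN ≤ m * ((k-1) * m^N)
      have c1 : d * N * AN ≤ m * ((k - 1) * m ^ N) := by
        calc d * N * AN = ∑ _n ∈ range N, d * AN := by
              rw [sum_const, card_range, smul_eq_mul]
              ring
          _ ≤ ∑ n ∈ range N, m * (univ.filter (fun ι : Fin N → Fin m =>
                3 ≤ (Wset C N n ι).card ∧
                  (Wset C N (n+1) ι).card < (Wset C N n ι).card)).card := by
              apply sum_le_sum
              intro n hn
              have hnN : n ≤ N := by
                have := mem_range.mp hn
                omega
              calc d * AN ≤ d * (univ.filter (fun ι : Fin N → Fin m =>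
                    3 ≤ (Wset C N n ι).card)).card := by
                    rw [hAN]
                    exact Nat.mul_le_mul_left d (card_le_card (A_decreasing hadd hzero hnN))
                _ ≤ _ := step_counting d hzero hadd hweight (mem_range.mp hn)
          _ = m * ∑ n ∈ range N, (univ.filter (fun ι : Fin N → Fin m =>
                3 ≤ (Wset C N n ι).card ∧
                  (Wset C N (n+1) ι).card < (Wset C N n ι).card)).card := by
              rw [mul_sum]
          _ ≤ m * ((k - 1) * m ^ N) := by
              apply Nat.mul_le_mul_left
              exact budget_agg hzero hadd hcard (by omega) N
      -- 2 * AN ≤ m ^ N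
      have c2 : 2 * AN ≤ m ^ N := by
        by_contra hc
        push_neg at hc
        have hb1 : 1 ≤ m * (k - 1) :=
          Nat.one_le_iff_ne_zero.mpr (Nat.mul_ne_zero (by omega) (by omega))
        have h5 : m * (k - 1) * (2 * AN) + AN ≤ m * (k - 1) * m ^ N := by
          calc m * (k - 1) * (2 * AN) + AN = (2 * m * (k - 1) + 1) * AN := by ring
            _ ≤ d * N * AN := Nat.mul_le_mul_right AN hdN1
            _ ≤ m * ((k - 1) * m ^ N) := c1
            _ = m * (k - 1) * m ^ N := by ring
        have h6 : m * (k - 1) * m ^ N < m * (k - 1) * (2 * AN) :=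
          (Nat.mul_lt_mul_left (show 0 < m * (k - 1) by omega)).mpr hc
        have h7 : m * (k - 1) * (2 * AN) < m * (k - 1) * (2 * AN) :=
          lt_of_le_of_lt (le_trans (Nat.le_add_right _ AN) h5) h6
        exact absurd h7 (lt_irrefl _)
      -- complement count
      obtain ⟨S, hS⟩ : ∃ x, x = univ.filter
          (fun ι : Fin N → Fin m => (Wset C N N ι).card ≤ 2) := ⟨_, rfl⟩
      have c3 : AN + S.card = m ^ N := by
        have hsplit := card_filter_add_card_filter_not
          (s := (univ : Finset (Fin N → Fin m)))
          (p := fun ι => 3 ≤ (Wset C N N ι).card)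
        have hcongr : (univ.filter (fun ι : Fin N → Fin m => ¬ 3 ≤ (Wset C N N ι).card))
            = S := by
          rw [hS]
          apply filter_congr
          intro ι _
          constructor
          · intro h; omega
          · intro h; omega
        rw [hcongr] at hsplit
        rw [hAN]
        rw [card_univ, Fintype.card_fun, Fintype.card_fin, Fintype.card_fin] at hsplit
        exact hsplit
      -- hitting-time fiber decomposition
      have hex : ∀ ι : Fin N → Fin m, ∃ n', (Wset C N n' ι).card ≤ 2 ∨ N < n' :=
        fun ι => ⟨N + 1, Or.inr (Nat.lt_succ_self N)⟩
      have hhit : ∀ ι ∈ S, k - 1 ≤ Nat.find (hex ι) ∧ Nat.find (hex ι) ≤ N ∧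
          (Wset C N (Nat.find (hex ι)) ι).card = 2 := by
        intro ι hι
        rw [hS] at hι
        have hmem : (Wset C N N ι).card ≤ 2 := (mem_filter.mp hι).2
        exact seq_hit (f := fun n' => (Wset C N n' ι).card) (hex ι)
          (Wdich_card hadd ι) (fun n' => Wcard_pos hzero ι)
          (by show (Wset C N 0 ι).card = 2 ^ k; rw [W0, hcard]) hk2 hmem
      have c4 : S.card ≤ ∑ n ∈ Finset.Icc (k - 1) N,
          (univ.filter (fun ι : Fin N → Fin m => (Wset C N n ι).card = 2)).card := by
        have hfib := card_eq_sum_card_fiberwise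
          (f := fun ι => Nat.find (hex ι)) (s := S) (t := Finset.Icc (k - 1) N)
          (fun ι hι => by
            obtain ⟨h1, h2, _⟩ := hhit ι hι
            exact Finset.mem_Icc.mpr ⟨h1, h2⟩)
        rw [hfib]
        apply sum_le_sum
        intro n _
        apply card_le_card
        intro ι hι
        obtain ⟨hιS, hιn⟩ := mem_filter.mp hι
        obtain ⟨_, _, h3⟩ := hhit ι hιS
        have hιn' : Nat.find (hex ι) = n := hιn
        rw [hιn'] at h3
        exact mem_filter.mpr ⟨mem_univ _, h3⟩
      -- pigeonhole
      have hIccNe : (Finset.Icc (k - 1) N).Nonempty := Finset.nonempty_Icc.mpr (by omega)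
      obtain ⟨nstar, hnstarIcc, hnstarMax⟩ := Finset.exists_max_image
        (Finset.Icc (k - 1) N)
        (fun n => (univ.filter (fun ι : Fin N → Fin m => (Wset C N n ι).card = 2)).card)
        hIccNe
      obtain ⟨hnstar1, hnstar2⟩ := Finset.mem_Icc.mp hnstarIcc
      obtain ⟨s, hscard⟩ : ∃ x, x = (Finset.Icc (k - 1) N).card := ⟨_, rfl⟩
      obtain ⟨cN, hcN⟩ : ∃ x, x = (univ.filter (fun ι : Fin N → Fin m =>
        (Wset C N nstar ι).card = 2)).card := ⟨_, rfl⟩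
      have hsum : ∑ n ∈ Finset.Icc (k - 1) N,
          (univ.filter (fun ι : Fin N → Fin m => (Wset C N n ι).card = 2)).card
          ≤ s * cN := by
        calc ∑ n ∈ Finset.Icc (k - 1) N,
            (univ.filter (fun ι : Fin N → Fin m => (Wset C N n ι).card = 2)).card
            ≤ (Finset.Icc (k - 1) N).card • cN :=
              sum_le_card_nsmul _ _ _ (fun n hn => by rw [hcN]; exact hnstarMax n hn)
          _ = s * cN := by rw [smul_eq_mul, hscard]
      have c5 : m ^ N ≤ 2 * (s * cN) := by
        have h8 : m ^ N ≤ 2 * S.card := by omega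
        have h9 : 2 * S.card ≤ 2 * (s * cN) :=
          Nat.mul_le_mul_left 2 (le_trans c4 hsum)
        omega
      -- s bound : d * s ≤ 2 * m * k
      have hs_eq : s + k = N + 2 := by
        rw [hscard, Nat.card_Icc]
        omega
      have hds : d * s ≤ 2 * m * k := by
        have e1 : d * s + d * k = d * N + 2 * d := by
          calc d * s + d * k = d * (s + k) := by ring
            _ = d * (N + 2) := by rw [hs_eq]
            _ = d * N + 2 * d := by ring
        have e4 : 2 * d ≤ d * k := by
          calc 2 * d = d * 2 := by ring
            _ ≤ d * k := Nat.mul_le_mul_left d hk2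
        omega
      -- transfer to horizon nstar
      obtain ⟨c', hc'⟩ : ∃ x, x = (univ.filter (fun ι' : Fin nstar → Fin m =>
        (C.filter (fun c => ∀ j : Fin nstar, c (ι' j) = 0)).card = 2)).card := ⟨_, rfl⟩
      have htrans : cN = c' * m ^ (N - nstar) := by
        rw [hcN, hc']
        exact transfer hnstar2
      -- the key ℕ inequality
      have hkey : d * m ^ nstar ≤ 4 * (m * (k * c')) := by
        have hpow : 0 < m ^ (N - nstar) := Nat.pow_pos hm
        apply Nat.le_of_mul_le_mul_right _ hpow
        calc d * m ^ nstar * m ^ (N - nstar) = d * m ^ N := by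
              rw [mul_assoc, ← pow_add, Nat.add_sub_cancel' hnstar2]
          _ ≤ d * (2 * (s * (c' * m ^ (N - nstar)))) := by
              apply Nat.mul_le_mul_left
              rw [← htrans]
              exact c5
          _ = (d * s) * (2 * (c' * m ^ (N - nstar))) := by ring
          _ ≤ (2 * m * k) * (2 * (c' * m ^ (N - nstar))) :=
              Nat.mul_le_mul_right _ hds
          _ = 4 * (m * (k * c')) * m ^ (N - nstar) := by ring
      refine ⟨nstar, hnstar1, ?_, ?_⟩
      · -- nstar ≤ 2mk/d
        rw [le_div_iff₀ (by positivity)]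
        have hn : nstar * d ≤ 2 * m * k := by
          calc nstar * d = d * nstar := by ring
            _ ≤ d * N := Nat.mul_le_mul_left d hnstar2
            _ ≤ 2 * m * k := hdN3
        exact_mod_cast hn
      · exact final_real m k d nstar _ c' hm hk hd1
          (by rw [hc']; exact numerator_eq hadd hcard nstar) hkey
  · -- the "moreover" part
    intro n cstar hcs ι c₁ h1 c₂ h2 hne
    obtain ⟨h1C, _⟩ := mem_filter.mp h1
    obtain ⟨h2C, _⟩ := mem_filter.mp h2
    have hsum : c₁ + c₂ ∈ C := hadd _ h1C _ h2C
    have hnz : c₁ + c₂ ≠ 0 := by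
      intro h
      apply hne
      funext i
      exact (zmod2_iff _ _).1 (congrFun h i)
    have hw := hweight _ hsum hnz
    refine le_trans hw (le_of_eq (congrArg Finset.card ?_))
    apply filter_congr
    intro i _
    rw [Pi.add_apply]
    constructor
    · intro h h'
      exact h ((zmod2_iff _ _).2 h')
    · intro h h'
      exact h ((zmod2_iff _ _).1 h')
end
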